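/- arXiv:2302.06109 — 4 statements merged into one kernel-verified Lean document; each statement's English description precedes it below -/
import Mathlib

section
/- Let 𝔄 be a unital C*-algebra with nonempty tracial state space 𝒯, and let (𝔄, G, Θ) be a C*-dynamical system with G a countable discrete amenable group. Then there exists a Θ-invariant tracial state on 𝔄. -/
open scoped ComplexOrder symmDiff

/-- A state on a unital C*-algebra, as an element of the weak-* dual. -/
def IsState {A : Type*} [NormedRing A] [StarRing A] [CStarRing A] [NormedAlgebra ℂ A]
    [CompleteSpace A] [StarModule ℂ A] (φ : WeakDual ℂ A) : Prop :=
  φ 1 = 1 ∧ ∀ a : A, 0 ≤ φ (star a * a)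

/-- An action by algebra automorphisms is a *-action if each automorphism preserves `star`,
i.e. each `Θ g` is a *-automorphism. -/
def IsStarAction {A G : Type*} [NormedRing A] [StarRing A] [NormedAlgebra ℂ A] [Group G]
    (Θ : G →* (A ≃ₐ[ℂ] A)) : Prop :=
  ∀ (g : G) (x : A), Θ g (star x) = star (Θ g x)

/-- The ergodic average `Avg_F x = (1/|F|) ∑_{g ∈ F} Θ_g x`. -/
noncomputable def avg {A G : Type*} [NormedRing A] [NormedAlgebra ℂ A] [Group G]
    (Θ : G →* (A ≃ₐ[ℂ] A)) (F : Finset G) (x : A) : A :=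
  ((F.card : ℂ))⁻¹ • ∑ g ∈ F, Θ g x

/-- A right Følner sequence: nonempty finite sets with `|F_k g Δ F_k| / |F_k| → 0`. -/
def RightFolner {G : Type*} [Group G] [DecidableEq G] (F : ℕ → Finset G) : Prop :=
  (∀ k, (F k).Nonempty) ∧ ∀ g : G, Filter.Tendsto
    (fun k => ((Finset.image (· * g) (F k) ∆ F k).card : ℝ) / (F k).card)
    Filter.atTop (nhds 0)

/-- If the tracial state space is nonempty and `G` is amenable, there is a Θ-invariant
tracial state. -/
theorem stmt2 {A G : Type*} [NormedRing A] [StarRing A] [CStarRing A] [NormedAlgebra ℂ A]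
    [CompleteSpace A] [StarModule ℂ A] [Group G] [Countable G] [DecidableEq G]
    (Θ : G →* (A ≃ₐ[ℂ] A)) (hΘ : IsStarAction Θ)
    (htrace : ∃ τ : WeakDual ℂ A, IsState τ ∧ ∀ x y : A, τ (x * y) = τ (y * x))
    (hamen : ∃ F : ℕ → Finset G, RightFolner F) :
    ∃ φ : WeakDual ℂ A, IsState φ ∧ (∀ x y : A, φ (x * y) = φ (y * x)) ∧
      ∀ (g : G) (x : A), φ (Θ g x) = φ x := by
  classical
  letI : CStarAlgebra A := ⟨⟩
  obtain ⟨τ, ⟨hτ1, hτpos⟩, hτtr⟩ := htrace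
  obtain ⟨F, hFne, hFol⟩ := hamen
  -- Each `Θ g` is isometric, being a star-algebra monomorphism of C*-algebras.
  have hiso : ∀ (g : G) (x : A), ‖Θ g x‖ = ‖x‖ := by
    intro g x
    let e : A →⋆ₐ[ℂ] A := { (Θ g : A →ₐ[ℂ] A) with map_star' := hΘ g }
    exact NonUnitalStarAlgHom.norm_map e (Θ g).injective x
  -- View τ as a (norm-)continuous linear functional.
  let T : A →L[ℂ] ℂ := τ
  have hT : ∀ y, τ y = T y := fun _ => rfl
  -- basic cardinality facts
  have hcard0 : ∀ k, ((F k).card : ℂ) ≠ 0 := fun k =>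
    Nat.cast_ne_zero.mpr (Finset.card_pos.mpr (hFne k)).ne'
  have hcardR : ∀ k, (0 : ℝ) < (F k).card := fun k => by
    exact_mod_cast Finset.card_pos.mpr (hFne k)
  -- the approximating sequence
  set s : A → ℕ → ℂ := fun x k => T (avg Θ (F k) x) with hs
  have hnormc : ∀ k, ‖((F k).card : ℂ)⁻¹‖ = ((F k).card : ℝ)⁻¹ := by
    intro k
    rw [norm_inv]
    norm_num
  have havgnorm : ∀ (k : ℕ) (x : A), ‖avg Θ (F k) x‖ ≤ ‖x‖ := by
    intro k x
    rw [avg, norm_smul, hnormc]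
    have h1 : ‖∑ g ∈ F k, Θ g x‖ ≤ (F k).card * ‖x‖ := by
      calc ‖∑ g ∈ F k, Θ g x‖ ≤ ∑ g ∈ F k, ‖Θ g x‖ := norm_sum_le _ _
        _ = (F k).card * ‖x‖ := by simp [hiso]
    calc ((F k).card : ℝ)⁻¹ * ‖∑ g ∈ F k, Θ g x‖
        ≤ ((F k).card : ℝ)⁻¹ * ((F k).card * ‖x‖) := by gcongr
      _ = ‖x‖ := by field_simp
  have hbound : ∀ (x : A) (k : ℕ), ‖s x k‖ ≤ ‖T‖ * ‖x‖ := fun x k =>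
    (T.le_opNorm _).trans (mul_le_mul_of_nonneg_left (havgnorm k x) T.opNorm_nonneg)
  -- pick an ultrafilter extending atTop
  obtain ⟨U, hU⟩ := Ultrafilter.exists_le (Filter.atTop : Filter ℕ)
  -- limits along U exist
  have hlim : ∀ x : A, ∃ L : ℂ, Filter.Tendsto (s x) ↑U (nhds L) := by
    intro x
    obtain ⟨L, -, hL⟩ := (isCompact_closedBall (0 : ℂ) (‖T‖ * ‖x‖)).ultrafilter_le_nhds
      (U.map (s x)) (by
        rw [Ultrafilter.coe_map, Filter.le_principal_iff, Filter.mem_map]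
        exact Filter.univ_mem' fun k => by
          simpa [Metric.mem_closedBall, dist_zero_right] using hbound x k)
    exact ⟨L, by rwa [Filter.Tendsto, ← Ultrafilter.coe_map]⟩
  choose L hL using hlim
  -- algebraic properties of the approximants
  have hsadd : ∀ x y : A, s (x + y) = s x + s y := by
    intro x y
    funext k
    simp only [hs, avg, map_add, Finset.sum_add_distrib, smul_add, Pi.add_apply]
  have hssmul : ∀ (c : ℂ) (x : A), s (c • x) = fun k => c * s x k := by
    intro c x
    funext k
    simp only [hs, avg, map_smul, ← Finset.smul_sum, smul_comm _ c, smul_eq_mul]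
    ring
  have hLadd : ∀ x y : A, L (x + y) = L x + L y := by
    intro x y
    refine tendsto_nhds_unique (hL (x + y)) ?_
    rw [hsadd]
    exact (hL x).add (hL y)
  have hLsmul : ∀ (c : ℂ) (x : A), L (c • x) = c * L x := by
    intro c x
    refine tendsto_nhds_unique (hL (c • x)) ?_
    rw [hssmul]
    exact (hL x).const_mul c
  have hLbound : ∀ x : A, ‖L x‖ ≤ ‖T‖ * ‖x‖ := by
    intro x
    exact le_of_tendsto' ((hL x).norm) (fun k => hbound x k)
  -- assemble the invariant functional
  let φlin : A →ₗ[ℂ] ℂ :=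
    { toFun := L, map_add' := hLadd, map_smul' := hLsmul }
  let φ : A →L[ℂ] ℂ := φlin.mkContinuous ‖T‖ hLbound
  have hφ : ∀ x, (StrongDual.toWeakDual φ) x = L x := fun _ => rfl
  refine ⟨StrongDual.toWeakDual φ, ⟨?_, ?_⟩, ?_, ?_⟩
  · -- φ 1 = 1
    rw [hφ]
    refine tendsto_nhds_unique (hL 1) ?_
    have : s 1 = fun _ => (1 : ℂ) := by
      funext k
      have : avg Θ (F k) 1 = 1 := by
        rw [avg]
        simp only [map_one, Finset.sum_const, ← Nat.cast_smul_eq_nsmul ℂ, smul_smul,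
          inv_mul_cancel₀ (hcard0 k), one_smul]
      rw [hs]
      simp only [this]
      exact hT 1 ▸ hτ1
    rw [this]
    exact tendsto_const_nhds
  · -- positivity
    intro a
    rw [hφ]
    have hnn : ∀ k, 0 ≤ s (star a * a) k := by
      intro k
      have hterm : ∀ g ∈ F k, (0 : ℂ) ≤ T (Θ g (star a * a)) := by
        intro g _
        have : Θ g (star a * a) = star (Θ g a) * Θ g a := by
          rw [map_mul, hΘ]
        rw [this, ← hT]
        exact hτpos (Θ g a)
      have hsum : (0 : ℂ) ≤ ∑ g ∈ F k, T (Θ g (star a * a)) :=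
        Finset.sum_nonneg hterm
      have hc : (0 : ℂ) ≤ ((F k).card : ℂ)⁻¹ := by
        rw [show ((F k).card : ℂ)⁻¹ = ((((F k).card : ℝ)⁻¹ : ℝ) : ℂ) by push_cast; ring]
        exact_mod_cast (inv_nonneg.mpr (hcardR k).le)
      have : s (star a * a) k = ((F k).card : ℂ)⁻¹ * ∑ g ∈ F k, T (Θ g (star a * a)) := by
        simp only [hs, avg, map_smul, map_sum, smul_eq_mul]
      rw [this]
      exact mul_nonneg hc hsum
    have h1 : Filter.Tendsto (fun k => (s (star a * a) k).re) ↑U (nhds (L (star a * a)).re) :=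
      (Complex.continuous_re.continuousAt).tendsto.comp (hL _)
    have h2 : Filter.Tendsto (fun k => (s (star a * a) k).im) ↑U (nhds (L (star a * a)).im) :=
      (Complex.continuous_im.continuousAt).tendsto.comp (hL _)
    rw [Complex.nonneg_iff]
    constructor
    · exact ge_of_tendsto' h1 (fun k => (Complex.nonneg_iff.mp (hnn k)).1)
    · refine tendsto_nhds_unique ?_ h2
      have : (fun k => (s (star a * a) k).im) = fun _ => (0 : ℝ) := by
        funext k
        exact ((Complex.nonneg_iff.mp (hnn k)).2).symm
      rw [this]
      exact tendsto_const_nhds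
  · -- trace property
    intro x y
    rw [hφ, hφ]
    refine tendsto_nhds_unique (hL (x * y)) ?_
    have hsum : ∀ k, ∑ g ∈ F k, T (Θ g x * Θ g y) = ∑ g ∈ F k, T (Θ g y * Θ g x) :=
      fun k => Finset.sum_congr rfl fun g _ => by rw [← hT, ← hT, hτtr]
    have : s (x * y) = s (y * x) := by
      funext k
      simp only [hs, avg, map_smul, map_sum, map_mul]
      rw [hsum k]
    rw [this]
    exact hL (y * x)
  · -- invariance
    intro h x
    rw [hφ, hφ]
    have key : Filter.Tendsto (fun k => s (Θ h x) k - s x k) Filter.atTop (nhds 0) := by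
      have hfb : ∀ g : G, ‖T (Θ g x)‖ ≤ ‖T‖ * ‖x‖ := fun g => by
        calc ‖T (Θ g x)‖ ≤ ‖T‖ * ‖Θ g x‖ := T.le_opNorm _
          _ = ‖T‖ * ‖x‖ := by rw [hiso]
      refine squeeze_zero_norm (a := fun k =>
        ((Finset.image (· * h) (F k) ∆ F k).card : ℝ) / (F k).card * (‖T‖ * ‖x‖)) ?_ ?_
      · intro k
        set S : Finset G := Finset.image (· * h) (F k) with hS
        have h1 : ∑ g ∈ F k, T (Θ g (Θ h x)) = ∑ g' ∈ S, T (Θ g' x) := by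
          rw [hS, Finset.sum_image (fun a _ b _ hab => mul_right_cancel hab)]
          refine Finset.sum_congr rfl fun g _ => ?_
          rw [map_mul]
          rfl
        have hsub : s (Θ h x) k - s x k = ((F k).card : ℂ)⁻¹ *
            (∑ g ∈ S \ F k, T (Θ g x) - ∑ g ∈ F k \ S, T (Θ g x)) := by
          simp only [hs, avg, map_smul, map_sum, smul_eq_mul]
          rw [h1, Finset.sum_sdiff_sub_sum_sdiff]
          ring
        have hcS : ((S ∆ F k).card : ℝ) = ((S \ F k).card : ℝ) + ((F k \ S).card : ℝ) := by
          rw [symmDiff_def]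
          rw [show (S \ F k ⊔ F k \ S) = (S \ F k) ∪ (F k \ S) from rfl,
            Finset.card_union_of_disjoint disjoint_sdiff_sdiff]
          push_cast
          ring
        have hMnn : (0 : ℝ) ≤ ‖T‖ * ‖x‖ := mul_nonneg T.opNorm_nonneg (norm_nonneg x)
        have hb : ‖∑ g ∈ S \ F k, T (Θ g x) - ∑ g ∈ F k \ S, T (Θ g x)‖
            ≤ ((S ∆ F k).card : ℝ) * (‖T‖ * ‖x‖) := by
          calc ‖∑ g ∈ S \ F k, T (Θ g x) - ∑ g ∈ F k \ S, T (Θ g x)‖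
              ≤ ‖∑ g ∈ S \ F k, T (Θ g x)‖ + ‖∑ g ∈ F k \ S, T (Θ g x)‖ := norm_sub_le _ _
            _ ≤ ∑ g ∈ S \ F k, ‖T (Θ g x)‖ + ∑ g ∈ F k \ S, ‖T (Θ g x)‖ :=
                add_le_add (norm_sum_le _ _) (norm_sum_le _ _)
            _ ≤ ((S \ F k).card : ℝ) * (‖T‖ * ‖x‖) + ((F k \ S).card : ℝ) * (‖T‖ * ‖x‖) := by
                refine add_le_add ?_ ?_ <;>
                · refine (Finset.sum_le_card_nsmul _ _ _ fun g _ => hfb g).trans ?_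
                  rw [nsmul_eq_mul]
            _ = ((S ∆ F k).card : ℝ) * (‖T‖ * ‖x‖) := by rw [hcS]; ring
        rw [hsub, norm_mul, hnormc]
        calc ((F k).card : ℝ)⁻¹ * ‖∑ g ∈ S \ F k, T (Θ g x) - ∑ g ∈ F k \ S, T (Θ g x)‖
            ≤ ((F k).card : ℝ)⁻¹ * (((S ∆ F k).card : ℝ) * (‖T‖ * ‖x‖)) := by
              exact mul_le_mul_of_nonneg_left hb (inv_nonneg.mpr (hcardR k).le)
          _ = ((S ∆ F k).card : ℝ) / (F k).card * (‖T‖ * ‖x‖) := by ring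
      · simpa using (hFol h).mul_const (‖T‖ * ‖x‖)
    have l1 : Filter.Tendsto (fun k => s (Θ h x) k - s x k) ↑U (nhds (L (Θ h x) - L x)) :=
      (hL (Θ h x)).sub (hL x)
    have l2 : Filter.Tendsto (fun k => s (Θ h x) k - s x k) ↑U (nhds 0) :=
      key.mono_left hU
    exact sub_eq_zero.mp (tendsto_nhds_unique l1 l2)
end

section
/- Let (𝔄, G, Θ) be a C*-dynamical system with G countable discrete amenable, and let A ⊆ 𝔄 satisfy Θ_g A ⊆ A for all g ∈ G. If there exists a (not necessarily invariant) state on 𝔄 vanishing on A, then there exists a Θ-invariant state on 𝔄 vanishing on A. -/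
open scoped ComplexOrder symmDiff

/-- If a Θ-invariant subset `S ⊆ 𝔄` is annihilated by some state, it is annihilated by
some Θ-invariant state. -/
theorem stmt6 {A G : Type*} [NormedRing A] [StarRing A] [CStarRing A] [NormedAlgebra ℂ A]
    [CompleteSpace A] [StarModule ℂ A] [Group G] [Countable G] [DecidableEq G]
    (Θ : G →* (A ≃ₐ[ℂ] A)) (hΘ : IsStarAction Θ)
    (hamen : ∃ F : ℕ → Finset G, RightFolner F)
    (S : Set A) (hSinv : ∀ g : G, ∀ a ∈ S, Θ g a ∈ S)
    (hvanish : ∃ φ : WeakDual ℂ A, IsState φ ∧ ∀ a ∈ S, φ a = 0) :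
    ∃ φ : WeakDual ℂ A, IsState φ ∧ (∀ (g : G) (x : A), φ (Θ g x) = φ x) ∧
      ∀ a ∈ S, φ a = 0 := by
  obtain ⟨F, hFne, hFol⟩ := hamen
  obtain ⟨φ, hst, hφS⟩ := hvanish
  obtain ⟨hφ1, hφpos⟩ := hst
  refine ?_
  classical
  letI : CStarAlgebra A :=
    { toNormedRing := ‹_›, toStarRing := ‹_›, toCompleteSpace := ‹_›, toCStarRing := ‹_›,
      toNormedAlgebra := ‹_›, toStarModule := ‹_› }
  -- each Θ g is a star algebra equivalence, hence isometric
  let e : G → (A ≃⋆ₐ[ℂ] A) := fun g =>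
    { Θ g with map_star' := hΘ g, map_smul' := fun c x => map_smul (Θ g) c x }
  have he : ∀ (g : G) (x : A), e g x = Θ g x := fun g x => rfl
  have hnorm : ∀ (g : G) (x : A), ‖Θ g x‖ = ‖x‖ := fun g x => by
    rw [← he]; exact StarAlgEquiv.norm_map (e g) x
  -- Θ g as a continuous linear map
  let T : G → (A →L[ℂ] A) := fun g =>
    LinearMap.mkContinuous (Θ g).toLinearMap 1 (fun x => by
      show ‖Θ g x‖ ≤ 1 * ‖x‖
      rw [hnorm, one_mul])
  have hT : ∀ (g : G) (x : A), T g x = Θ g x := fun g x => rfl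
  let φ' : StrongDual ℂ A := φ
  have hφ' : ∀ a, φ' a = φ a := fun a => rfl
  -- the averaged functionals
  let ψ' : ℕ → StrongDual ℂ A := fun k =>
    ((F k).card : ℂ)⁻¹ • ∑ g ∈ F k, φ'.comp (T g)
  have hψ' : ∀ k a, ψ' k a = ((F k).card : ℂ)⁻¹ * ∑ g ∈ F k, φ (Θ g a) := by
    intro k a
    simp [ψ', ContinuousLinearMap.sum_apply, hT, hφ', smul_eq_mul]
  have hcard : ∀ k, 0 < (F k).card := fun k => Finset.card_pos.mpr (hFne k)
  have hcardC : ∀ k, ((F k).card : ℂ) ≠ 0 := fun k => by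
    exact_mod_cast (hcard k).ne'
  -- norm bound
  have hφnorm : ∀ (g : G) (a : A), ‖φ (Θ g a)‖ ≤ ‖φ'‖ * ‖a‖ := by
    intro g a
    calc ‖φ (Θ g a)‖ = ‖φ' (Θ g a)‖ := rfl
      _ ≤ ‖φ'‖ * ‖Θ g a‖ := φ'.le_opNorm _
      _ = ‖φ'‖ * ‖a‖ := by rw [hnorm]
  have hψnorm : ∀ k, ‖ψ' k‖ ≤ ‖φ'‖ := by
    intro k
    refine ContinuousLinearMap.opNorm_le_bound _ (norm_nonneg φ') (fun a => ?_)
    rw [show (ψ' k) a = ((F k).card : ℂ)⁻¹ * ∑ g ∈ F k, φ (Θ g a) from hψ' k a]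
    calc ‖((F k).card : ℂ)⁻¹ * ∑ g ∈ F k, φ (Θ g a)‖
        = ((F k).card : ℝ)⁻¹ * ‖∑ g ∈ F k, φ (Θ g a)‖ := by
          rw [norm_mul]; norm_num
      _ ≤ ((F k).card : ℝ)⁻¹ * ((F k).card * (‖φ'‖ * ‖a‖)) := by
          refine mul_le_mul_of_nonneg_left ?_ (by positivity)
          refine (norm_sum_le _ _).trans ?_
          calc ∑ g ∈ F k, ‖φ (Θ g a)‖ ≤ (F k).card • (‖φ'‖ * ‖a‖) :=
                Finset.sum_le_card_nsmul _ _ _ (fun g _ => hφnorm g a)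
            _ = (F k).card * (‖φ'‖ * ‖a‖) := by rw [nsmul_eq_mul]
      _ = ‖φ'‖ * ‖a‖ := by
          field_simp
  -- compactness / ultrafilter limit
  let ψ : ℕ → WeakDual ℂ A := fun k => ψ' k
  have hψap : ∀ k a, ψ k a = ((F k).card : ℂ)⁻¹ * ∑ g ∈ F k, φ (Θ g a) := hψ'
  let K : Set (WeakDual ℂ A) := WeakDual.toStrongDual ⁻¹' Metric.closedBall 0 ‖φ'‖
  have hKcomp : IsCompact K := WeakDual.isCompact_closedBall (0 : StrongDual ℂ A) ‖φ'‖
  have hψK : ∀ k, ψ k ∈ K := by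
    intro k
    simp only [K, Set.mem_preimage, Metric.mem_closedBall, dist_zero_right]
    exact hψnorm k
  have hmapne : (Filter.map ψ Filter.atTop).NeBot := Filter.map_neBot
  let U : Ultrafilter (WeakDual ℂ A) := @Ultrafilter.of _ _ hmapne
  have hUle : (U : Filter (WeakDual ℂ A)) ≤ Filter.map ψ Filter.atTop := Ultrafilter.of_le _
  have hKU : K ∈ U := hUle (Filter.mem_map.mpr (Filter.Eventually.of_forall hψK))
  obtain ⟨Φ, hΦK, hlim⟩ := hKcomp.ultrafilter_le_nhds U (Filter.le_principal_iff.mpr hKU)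
  -- closed-set membership transfer
  have keymem : ∀ (f : WeakDual ℂ A → ℂ) (C : Set ℂ), Continuous f → IsClosed C →
      (∀ k, f (ψ k) ∈ C) → f Φ ∈ C := by
    intro f C hf hC hmem
    have h1 : Filter.Tendsto f U (nhds (f Φ)) := (hf.tendsto Φ).mono_left hlim
    refine hC.mem_of_tendsto h1 ?_
    have h3 : ∀ᶠ χ in Filter.map ψ Filter.atTop, f χ ∈ C :=
      Filter.eventually_map.mpr (Filter.Eventually.of_forall hmem)
    exact h3.filter_mono hUle
  have keyval : ∀ (f : WeakDual ℂ A → ℂ) (c : ℂ), Continuous f →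
      Filter.Tendsto (fun k => f (ψ k)) Filter.atTop (nhds c) → f Φ = c := by
    intro f c hf hten
    have h1 : Filter.Tendsto f U (nhds (f Φ)) := (hf.tendsto Φ).mono_left hlim
    have h2 : Filter.Tendsto f U (nhds c) :=
      (Filter.tendsto_map'_iff.mpr hten).mono_left hUle
    exact tendsto_nhds_unique h1 h2
  have heval : ∀ a : A, Continuous (fun χ : WeakDual ℂ A => χ a) :=
    fun a => WeakDual.eval_continuous a
  refine ⟨Φ, ⟨?_, ?_⟩, ?_, ?_⟩
  · -- Φ 1 = 1
    refine keyval _ 1 (heval 1) ?_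
    have : ∀ k, ψ k 1 = 1 := by
      intro k
      rw [hψap]
      simp only [map_one, hφ1, Finset.sum_const, nsmul_eq_mul, mul_one]
      rw [inv_mul_cancel₀ (hcardC _)]
    simpa [this] using tendsto_const_nhds
  · -- positivity
    intro a
    have hC : IsClosed {z : ℂ | 0 ≤ z} := by
      have : {z : ℂ | 0 ≤ z} = Complex.re ⁻¹' Set.Ici 0 ∩ Complex.im ⁻¹' {0} := by
        ext z
        simp [Complex.le_def, eq_comm]
      rw [this]
      exact (isClosed_Ici.preimage Complex.continuous_re).inter
        (isClosed_singleton.preimage Complex.continuous_im)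
    have := keymem (fun χ => χ (star a * a)) {z : ℂ | 0 ≤ z} (heval _) hC ?_
    · exact this
    intro k
    simp only [Set.mem_setOf_eq, hψap]
    have hterm : ∀ g ∈ F k, (0:ℂ) ≤ φ (Θ g (star a * a)) := by
      intro g _
      have : Θ g (star a * a) = star (Θ g a) * Θ g a := by
        rw [map_mul, hΘ]
      rw [this]
      exact hφpos _
    have hsum : (0:ℂ) ≤ ∑ g ∈ F k, φ (Θ g (star a * a)) := Finset.sum_nonneg hterm
    have hinv : (0:ℂ) ≤ ((F k).card : ℂ)⁻¹ := by
      have h0 : (0:ℝ) ≤ (((F k).card : ℝ))⁻¹ := by positivity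
      have h1 := Complex.zero_le_real.mpr h0
      exact h1.trans_eq (by push_cast; ring)
    exact mul_nonneg hinv hsum
  · -- invariance
    intro g x
    have key : (fun χ : WeakDual ℂ A => χ (Θ g x) - χ x) Φ = 0 := by
      refine keyval _ 0 (((heval _).sub (heval _))) ?_
      -- the Følner estimate
      set M : ℝ := ‖φ'‖ * ‖x‖ with hM
      have hbound : ∀ k, ‖ψ k (Θ g x) - ψ k x‖ ≤
          ((Finset.image (· * g) (F k) ∆ F k).card : ℝ) / (F k).card * M := by
        intro k
        set B := Finset.image (· * g) (F k) with hB
        set u : G → ℂ := fun h => φ (Θ h x) with hu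
        have h1 : ψ k (Θ g x) = ((F k).card : ℂ)⁻¹ * ∑ h ∈ B, u h := by
          rw [hψap, hB, Finset.sum_image (fun a _ b _ h => by
            exact mul_right_cancel h)]
          congr 1
          refine Finset.sum_congr rfl (fun h _ => ?_)
          show φ (Θ h (Θ g x)) = u (h * g)
          rw [hu]
          simp only
          congr 1
          rw [map_mul Θ]
          rfl
        have h2 : ψ k x = ((F k).card : ℂ)⁻¹ * ∑ h ∈ F k, u h := hψap k x
        rw [h1, h2, ← mul_sub, norm_mul]
        have hdiff : ‖∑ h ∈ B, u h - ∑ h ∈ F k, u h‖ ≤ ((B ∆ F k).card : ℝ) * M := by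
          rw [← Finset.sum_sdiff_sub_sum_sdiff]
          refine (norm_sub_le _ _).trans ?_
          have hB1 : ‖∑ h ∈ B \ F k, u h‖ ≤ ((B \ F k).card : ℝ) * M := by
            refine (norm_sum_le _ _).trans ?_
            rw [← nsmul_eq_mul, ← Finset.sum_const]
            exact Finset.sum_le_sum (fun h _ => hφnorm h x)
          have hB2 : ‖∑ h ∈ F k \ B, u h‖ ≤ ((F k \ B).card : ℝ) * M := by
            refine (norm_sum_le _ _).trans ?_
            rw [← nsmul_eq_mul, ← Finset.sum_const]
            exact Finset.sum_le_sum (fun h _ => hφnorm h x)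
          have hcardsd : ((B ∆ F k).card : ℝ) = (B \ F k).card + (F k \ B).card := by
            rw [symmDiff_def, Finset.sup_eq_union,
              Finset.card_union_of_disjoint (disjoint_sdiff_sdiff)]
            push_cast; ring
          rw [hcardsd]
          nlinarith [hB1, hB2]
        calc ‖(((F k).card : ℂ))⁻¹‖ * ‖∑ h ∈ B, u h - ∑ h ∈ F k, u h‖
            ≤ ((F k).card : ℝ)⁻¹ * (((B ∆ F k).card : ℝ) * M) := by
              refine mul_le_mul_of_nonneg_left hdiff ?_ |>.trans_eq ?_
              · simp
              · congr 1; simp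
          _ = ((B ∆ F k).card : ℝ) / (F k).card * M := by ring
      refine squeeze_zero_norm hbound ?_
      have := (hFol g).mul_const M
      simpa using this
    have := sub_eq_zero.mp key
    exact this
  · -- vanishing on S
    intro a ha
    refine keyval _ 0 (heval a) ?_
    have : ∀ k, ψ k a = 0 := by
      intro k
      rw [hψap]
      rw [Finset.sum_eq_zero (fun g _ => hφS _ (hSinv g a ha))]
      ring
    simpa [this] using tendsto_const_nhds
end

section
/- Let (𝔄, G, Θ) be a C*-dynamical system with 𝔄 separable and G countable discrete amenable, and let (F_k) be a right Følner sequence for G. Then for every positive element a ∈ 𝔄, the sequence ‖(1/|F_k|) Σ_{g∈F_k} Θ_g a‖ converges to m(a | S^G) = sup{ψ(a) : ψ a Θ-invariant state}. In particular the limit is independent of the choice of right Følner sequence. -/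
open scoped ComplexOrder symmDiff

set_option linter.unusedSectionVars false

namespace Stmt15

variable {A : Type*} [NormedRing A] [StarRing A] [CStarRing A] [NormedAlgebra ℂ A]
  [CompleteSpace A] [StarModule ℂ A]

@[reducible]
noncomputable def cstar : CStarAlgebra A :=
  { ‹NormedRing A›, ‹StarRing A›, ‹CStarRing A›, ‹CompleteSpace A›,
    ‹NormedAlgebra ℂ A›, ‹StarModule ℂ A› with }

lemma nontrivial_of_state {φ : WeakDual ℂ A} (h1 : φ 1 = 1) : Nontrivial A := by
  refine ⟨1, 0, fun h => ?_⟩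
  rw [h, map_zero] at h1
  exact one_ne_zero h1.symm

lemma norm_one' [Nontrivial A] : ‖(1 : A)‖ = 1 := by
  letI := cstar (A := A)
  exact norm_one

/-- key norm computation: `‖y + (t I)•1‖² ≤ ‖y‖² + t²` for selfadjoint y -/
lemma norm_sq_add_smul_I [Nontrivial A] {y : A} (hy : IsSelfAdjoint y) (t : ℝ) :
    ‖y + ((t : ℂ) * Complex.I) • 1‖ ^ 2 ≤ ‖y‖ ^ 2 + t ^ 2 := by
  set s : ℂ := (t : ℂ) * Complex.I with hs
  have hstar : star (y + s • (1 : A)) = y + (-s) • 1 := by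
    simp only [star_add, star_smul, star_one, hy.star_eq, hs]
    congr 1
    rw [show star ((t:ℂ) * Complex.I) = -((t:ℂ) * Complex.I) from by
      simp [Complex.ext_iff]]
  have hss : (-s) * s = (t : ℂ) ^ 2 := by
    rw [hs]; ring_nf; rw [Complex.I_sq]; ring
  have hmul : (y + (-s) • (1 : A)) * (y + s • 1) = y * y + ((t:ℂ) ^ 2) • 1 := by
    rw [add_mul, mul_add, mul_add, smul_mul_assoc, smul_mul_assoc, mul_smul_comm,
      one_mul, mul_one]
    simp only [one_mul, smul_smul, hss, neg_smul, neg_mul]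
    abel
  have hnorm : ‖y + s • (1 : A)‖ ^ 2 = ‖y * y + ((t:ℂ) ^ 2) • (1 : A)‖ := by
    rw [← hmul, ← hstar, CStarRing.norm_star_mul_self, sq]
  rw [hnorm]
  calc ‖y * y + ((t:ℂ) ^ 2) • (1 : A)‖ ≤ ‖y * y‖ + ‖((t:ℂ) ^ 2) • (1 : A)‖ := norm_add_le _ _
    _ = ‖y‖ ^ 2 + t ^ 2 := by
        rw [norm_smul, norm_one', show y * y = star y * y by rw [hy.star_eq],
          CStarRing.norm_star_mul_self, ← sq]
        norm_num

lemma im_eq_zero_of_selfAdjoint {φ : WeakDual ℂ A} (h1 : φ 1 = 1)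
    (hb : ∀ x, ‖φ x‖ ≤ ‖x‖) {y : A} (hy : IsSelfAdjoint y) : (φ y).im = 0 := by
  have : Nontrivial A := nontrivial_of_state h1
  have key : ∀ t : ℝ, (φ y).re ^ 2 + ((φ y).im + t) ^ 2 ≤ ‖y‖ ^ 2 + t ^ 2 := by
    intro t
    have happ : φ (y + ((t : ℂ) * Complex.I) • 1) = φ y + (t : ℂ) * Complex.I := by
      rw [map_add, map_smul, h1, smul_eq_mul, mul_one]
    have h2 := hb (y + ((t : ℂ) * Complex.I) • 1)
    have h3 : ‖φ (y + ((t : ℂ) * Complex.I) • 1)‖ ^ 2 = (φ y).re ^ 2 + ((φ y).im + t) ^ 2 := by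
      rw [happ, Complex.sq_norm]
      simp [Complex.normSq_apply]
      ring
    have h4 := norm_sq_add_smul_I hy t
    nlinarith [norm_nonneg (φ (y + ((t : ℂ) * Complex.I) • 1)),
      norm_nonneg (y + ((t : ℂ) * Complex.I) • 1)]
  by_contra hβ
  have h := key ((‖y‖ ^ 2 + 1) / (2 * (φ y).im))
  have h2im : 2 * (φ y).im * ((‖y‖ ^ 2 + 1) / (2 * (φ y).im)) = ‖y‖ ^ 2 + 1 := by
    field_simp
  nlinarith [sq_nonneg ((φ y).re), sq_nonneg ((φ y).im)]

section Order

open ComplexStarModule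

variable [PartialOrder A] [StarOrderedRing A]

lemma exists_star_mul_self {c : A} (hc : 0 ≤ c) : ∃ s : A, star s * s = c := by
  letI := cstar (A := A)
  refine ⟨CFC.sqrt c, ?_⟩
  rw [(IsSelfAdjoint.of_nonneg (CFC.sqrt_nonneg c)).star_eq, CFC.sqrt_mul_sqrt_self c hc]

lemma state_apply_nonneg {φ : WeakDual ℂ A} (hφ : IsState φ) {c : A} (hc : 0 ≤ c) :
    0 ≤ φ c := by
  obtain ⟨s, rfl⟩ := exists_star_mul_self hc
  exact hφ.2 s

lemma apply_algebraMap (φ : WeakDual ℂ A) (h1 : φ 1 = 1) (r : ℝ) :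
    φ (algebraMap ℝ A r) = r := by
  rw [IsScalarTower.algebraMap_apply ℝ ℂ A r, Algebra.algebraMap_eq_smul_one, map_smul, h1]
  simp

lemma state_nonneg_bounds {φ : WeakDual ℂ A} (hφ : IsState φ) {c : A} (hc : 0 ≤ c) :
    (φ c).im = 0 ∧ 0 ≤ (φ c).re ∧ (φ c).re ≤ ‖c‖ := by
  letI := cstar (A := A)
  have h0 := state_apply_nonneg hφ hc
  rw [Complex.le_def] at h0
  have hd : (0 : A) ≤ algebraMap ℝ A ‖c‖ - c :=
    sub_nonneg.2 (IsSelfAdjoint.le_algebraMap_norm_self (.of_nonneg hc))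
  have h2 := state_apply_nonneg hφ hd
  rw [map_sub, apply_algebraMap φ hφ.1, Complex.le_def] at h2
  simp only [Complex.zero_re, Complex.zero_im, Complex.sub_re, Complex.ofReal_re] at h0 h2
  exact ⟨h0.2.symm, h0.1, by linarith⟩

lemma state_selfAdjoint_bounds {φ : WeakDual ℂ A} (hφ : IsState φ) {y : A}
    (hy : IsSelfAdjoint y) : (φ y).im = 0 ∧ |(φ y).re| ≤ ‖y‖ := by
  letI := cstar (A := A)
  have : Nontrivial A := nontrivial_of_state hφ.1
  have h1 : (0 : A) ≤ y + algebraMap ℝ A ‖y‖ := by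
    have := hy.neg_algebraMap_norm_le_self
    rw [neg_le] at this
    calc (0:A) = -y + y := by abel
    _ ≤ algebraMap ℝ A ‖y‖ + y := add_le_add_left this y
    _ = y + algebraMap ℝ A ‖y‖ := by abel
  obtain ⟨him, hre0, hrele⟩ := state_nonneg_bounds hφ h1
  have heq : φ y = φ (y + algebraMap ℝ A ‖y‖) - (‖y‖ : ℂ) := by
    rw [map_add, apply_algebraMap φ hφ.1]; ring
  have hnorm : ‖y + algebraMap ℝ A ‖y‖‖ ≤ 2 * ‖y‖ := by
    calc ‖y + algebraMap ℝ A ‖y‖‖ ≤ ‖y‖ + ‖algebraMap ℝ A ‖y‖‖ := norm_add_le _ _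
      _ ≤ ‖y‖ + |‖y‖| * ‖(1:A)‖ := by
          rw [Algebra.algebraMap_eq_smul_one, norm_smul, Real.norm_eq_abs]
      _ = 2 * ‖y‖ := by rw [norm_one', abs_of_nonneg (norm_nonneg y)]; ring
  rw [heq]
  constructor
  · simp only [Complex.sub_im, him, Complex.ofReal_im, sub_zero]
  · simp only [Complex.sub_re, Complex.ofReal_re]
    rw [abs_le]; constructor <;> nlinarith

lemma state_norm_apply_le {φ : WeakDual ℂ A} (hφ : IsState φ) (x : A) :
    ‖φ x‖ ≤ 2 * ‖x‖ := by
  have hdecomp := realPart_add_I_smul_imaginaryPart x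
  have happ : φ x = φ (ℜ x : A) + Complex.I * φ (ℑ x : A) := by
    conv_lhs => rw [← hdecomp]
    rw [map_add, map_smul, smul_eq_mul]
  have hsa : ∀ y : selfAdjoint A, ‖φ (y : A)‖ ≤ ‖(y : A)‖ := by
    intro y
    obtain ⟨him, hre⟩ := state_selfAdjoint_bounds hφ y.2
    have : φ (y : A) = (((φ (y : A)).re : ℝ) : ℂ) := Complex.ext rfl him
    rw [this, Complex.norm_real, Real.norm_eq_abs]
    exact hre
  have hR : ‖(ℜ x : A)‖ ≤ ‖x‖ := by
    rw [realPart_apply_coe, norm_smul]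
    calc ‖(2:ℝ)⁻¹‖ * ‖x + star x‖ ≤ 2⁻¹ * (‖x‖ + ‖star x‖) := by
          rw [Real.norm_eq_abs, abs_of_nonneg (by norm_num)]
          exact mul_le_mul_of_nonneg_left (norm_add_le _ _) (by norm_num)
      _ = ‖x‖ := by rw [norm_star]; ring
  have hI : ‖(ℑ x : A)‖ ≤ ‖x‖ := by
    rw [imaginaryPart_apply_coe, norm_smul, norm_smul]
    calc ‖-Complex.I‖ * (‖(2:ℝ)⁻¹‖ * ‖x - star x‖) ≤ 1 * (2⁻¹ * (‖x‖ + ‖star x‖)) := by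
          rw [norm_neg, Complex.norm_I, Real.norm_eq_abs, abs_of_nonneg (by norm_num : (0:ℝ) ≤ 2⁻¹)]
          refine mul_le_mul_of_nonneg_left ?_ (by norm_num)
          exact mul_le_mul_of_nonneg_left (norm_sub_le _ _) (by norm_num)
      _ = ‖x‖ := by rw [norm_star]; ring
  calc ‖φ x‖ ≤ ‖φ (ℜ x : A)‖ + ‖Complex.I * φ (ℑ x : A)‖ := by rw [happ]; exact norm_add_le _ _
    _ ≤ ‖(ℜ x : A)‖ + ‖(ℑ x : A)‖ := by
        rw [norm_mul, Complex.norm_I, one_mul]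
        exact add_le_add (hsa _) (hsa _)
    _ ≤ 2 * ‖x‖ := by linarith

lemma isState_of_bounds {φ : WeakDual ℂ A} (h1 : φ 1 = 1) (hb : ∀ x, ‖φ x‖ ≤ ‖x‖) :
    IsState φ := by
  letI := cstar (A := A)
  have : Nontrivial A := nontrivial_of_state h1
  refine ⟨h1, fun x => ?_⟩
  set c := star x * x with hc
  have hc0 : (0 : A) ≤ c := star_mul_self_nonneg x
  have hcsa : IsSelfAdjoint c := .star_mul_self x
  set d := algebraMap ℝ A ‖c‖ - c with hd
  have hdsa : IsSelfAdjoint d := by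
    have : IsSelfAdjoint (algebraMap ℝ A ‖c‖) := .algebraMap A (IsSelfAdjoint.all _)
    exact this.sub hcsa
  have hd0 : (0 : A) ≤ d := sub_nonneg.2 (IsSelfAdjoint.le_algebraMap_norm_self hcsa)
  have hdle : ‖d‖ ≤ ‖c‖ := by
    rw [CStarAlgebra.norm_le_iff_le_algebraMap d (norm_nonneg c) hd0]
    have : d ≤ algebraMap ℝ A ‖c‖ - 0 := sub_le_sub_left hc0 _
    simpa using this
  have himc : (φ c).im = 0 := im_eq_zero_of_selfAdjoint h1 hb hcsa
  have himd : (φ d).im = 0 := im_eq_zero_of_selfAdjoint h1 hb hdsa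
  have hφd : φ d = (‖c‖ : ℂ) - φ c := by
    rw [hd, map_sub, apply_algebraMap φ h1]
  have hred : |(φ d).re| ≤ ‖c‖ := by
    calc |(φ d).re| ≤ ‖φ d‖ := Complex.abs_re_le_norm _
      _ ≤ ‖d‖ := hb d
      _ ≤ ‖c‖ := hdle
  have : (φ d).re = ‖c‖ - (φ c).re := by rw [hφd]; simp
  rw [Complex.le_def]
  refine ⟨?_, himc.symm⟩
  simp only [Complex.zero_re]
  rw [abs_le] at hred
  linarith [hred.2, this]

lemma exists_state_norm_attained [Nontrivial A] {b : A} (hb : 0 ≤ b) :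
    ∃ φ : WeakDual ℂ A, IsState φ ∧ φ b = (‖b‖ : ℂ) := by
  letI := cstar (A := A)
  haveI hnormal : IsStarNormal b := (IsSelfAdjoint.of_nonneg hb).isStarNormal
  have hspec : (‖b‖ : ℂ) ∈ spectrum ℂ b := by
    have := CStarAlgebra.norm_mem_spectrum_of_nonneg hb
    simpa using spectrum.algebraMap_mem ℂ this
  haveI : Nontrivial (StarAlgebra.elemental ℂ b) :=
    ⟨⟨1, 0, fun h => one_ne_zero (congrArg Subtype.val h)⟩⟩
  obtain ⟨χ, hχ⟩ := (StarAlgebra.elemental.bijective_characterSpaceToSpectrum b).2 ⟨_, hspec⟩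
  have hχb : χ ⟨b, StarAlgebra.elemental.self_mem ℂ b⟩ = (‖b‖ : ℂ) :=
    congrArg Subtype.val hχ
  have hχle : ∀ z : StarAlgebra.elemental ℂ b, ‖χ z‖ ≤ ‖z‖ := fun z =>
    spectrum.norm_le_norm_of_mem (AlgHom.apply_mem_spectrum χ z)
  set p : Submodule ℂ A :=
    Subalgebra.toSubmodule (StarAlgebra.elemental ℂ b).toSubalgebra with hp
  have hmemB : ∀ x : p, (x : A) ∈ StarAlgebra.elemental ℂ b := fun x => x.2
  let f₀ : p →L[ℂ] ℂ := LinearMap.mkContinuous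
    { toFun := fun x => χ ⟨x.1, hmemB x⟩
      map_add' := fun x y => by rw [← map_add]; rfl
      map_smul' := fun m x => by rw [← map_smul]; rfl } 1
    (fun x => by rw [one_mul]; exact hχle ⟨x.1, hmemB x⟩)
  obtain ⟨g, hg_ext, hg_norm⟩ := exists_extension_norm_eq p f₀
  have hf₀_norm : ‖f₀‖ ≤ 1 := LinearMap.mkContinuous_norm_le _ zero_le_one _
  have hg1 : g 1 = 1 := by
    have h1p : (1 : A) ∈ p := (StarAlgebra.elemental ℂ b).toSubalgebra.one_mem
    have := hg_ext ⟨1, h1p⟩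
    rw [this]
    show χ ⟨1, _⟩ = 1
    exact map_one χ
  have hgb : g b = (‖b‖ : ℂ) := by
    have hbp : b ∈ p := StarAlgebra.elemental.self_mem ℂ b
    have := hg_ext ⟨b, hbp⟩
    rw [this]
    show χ ⟨b, _⟩ = (‖b‖ : ℂ)
    exact hχb
  refine ⟨g, isState_of_bounds hg1 (fun x => ?_), hgb⟩
  calc ‖g x‖ ≤ ‖g‖ * ‖x‖ := g.le_opNorm x
    _ ≤ 1 * ‖x‖ := by rw [hg_norm]; exact mul_le_mul_of_nonneg_right hf₀_norm (norm_nonneg x)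
    _ = ‖x‖ := one_mul _

end Order
section Action

def toCLM (φ : WeakDual ℂ A) : A →L[ℂ] ℂ := φ

def ofCLM (f : A →L[ℂ] ℂ) : WeakDual ℂ A := f

@[simp] lemma ofCLM_apply (f : A →L[ℂ] ℂ) (x : A) : ofCLM f x = f x := rfl

variable [PartialOrder A] [StarOrderedRing A]
variable {G : Type*} [Group G] (Θ : G →* (A ≃ₐ[ℂ] A)) (hΘ : IsStarAction Θ)

def thetaStarEquiv (g : G) : A ≃⋆ₐ[ℂ] A :=
  { (Θ g).toRingEquiv with
    map_star' := hΘ g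
    map_smul' := fun c x => map_smul (Θ g) c x }

include hΘ in
lemma norm_theta (g : G) (x : A) : ‖Θ g x‖ = ‖x‖ := by
  letI := cstar (A := A)
  exact StarAlgEquiv.norm_map (thetaStarEquiv Θ hΘ g) x

include hΘ in
lemma theta_nonneg (g : G) {x : A} (hx : 0 ≤ x) : 0 ≤ Θ g x := by
  obtain ⟨s, rfl⟩ := exists_star_mul_self hx
  rw [map_mul, hΘ g]
  exact star_mul_self_nonneg _

noncomputable def thetaCLM (g : G) : A →L[ℂ] A :=
  LinearMap.mkContinuous (Θ g).toLinearMap 1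
    (fun x => by rw [one_mul]; exact le_of_eq (norm_theta Θ hΘ g x))

@[simp] lemma thetaCLM_apply (g : G) (x : A) : thetaCLM Θ hΘ g x = Θ g x := rfl

noncomputable def avgCLM (F : Finset G) : A →L[ℂ] A :=
  ((F.card : ℂ))⁻¹ • ∑ g ∈ F, thetaCLM Θ hΘ g

lemma avgCLM_apply (F : Finset G) (x : A) : avgCLM Θ hΘ F x = avg Θ F x := by
  simp [avgCLM, avg, ContinuousLinearMap.sum_apply]

noncomputable def avgW (F : Finset G) (φ : WeakDual ℂ A) : WeakDual ℂ A :=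
  ofCLM ((toCLM φ).comp (avgCLM Θ hΘ F))

@[simp] lemma avgW_apply (F : Finset G) (φ : WeakDual ℂ A) (x : A) :
    avgW Θ hΘ F φ x = φ (avg Θ F x) := by
  show φ (avgCLM Θ hΘ F x) = φ (avg Θ F x)
  rw [avgCLM_apply]

lemma avg_one (F : Finset G) (hFne : F.Nonempty) : avg Θ F (1 : A) = 1 := by
  have hcard : (F.card : ℂ) ≠ 0 := Nat.cast_ne_zero.2 (Finset.card_ne_zero.2 hFne)
  rw [avg]
  simp only [map_one, Finset.sum_const]
  rw [← Nat.cast_smul_eq_nsmul ℂ, smul_smul, inv_mul_cancel₀ hcard, one_smul]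

lemma avg_apply_sum (F : Finset G) (φ : WeakDual ℂ A) (x : A) :
    φ (avg Θ F x) = ((F.card : ℂ))⁻¹ * ∑ g ∈ F, φ (Θ g x) := by
  rw [avg, map_smul, map_sum, smul_eq_mul]

lemma avgW_isState (F : Finset G) (hFne : F.Nonempty) {φ : WeakDual ℂ A} (hφ : IsState φ) :
    IsState (avgW Θ hΘ F φ) := by
  constructor
  · rw [avgW_apply, avg_one Θ F hFne, hφ.1]
  · intro x
    rw [avgW_apply, avg_apply_sum]
    refine mul_nonneg ?_ (Finset.sum_nonneg fun g _ => ?_)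
    · have hh : ((F.card : ℂ))⁻¹ = ((((F.card : ℝ))⁻¹ : ℝ) : ℂ) := by
        rw [Complex.ofReal_inv, Complex.ofReal_natCast]
      rw [hh, Complex.zero_le_real]
      positivity
    · rw [show (Θ g) (star x * x) = star (Θ g x) * Θ g x by rw [map_mul, hΘ g]]
      exact hφ.2 _

lemma avgW_norm_le (F : Finset G) {φ : WeakDual ℂ A} (hφ : IsState φ) (x : A) :
    ‖avgW Θ hΘ F φ x‖ ≤ 2 * ‖x‖ := by
  rw [avgW_apply, avg_apply_sum]
  calc ‖((F.card : ℂ))⁻¹ * ∑ g ∈ F, φ (Θ g x)‖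
      = ((F.card : ℝ))⁻¹ * ‖∑ g ∈ F, φ (Θ g x)‖ := by
        rw [norm_mul, norm_inv]
        norm_num
    _ ≤ ((F.card : ℝ))⁻¹ * (F.card * (2 * ‖x‖)) := by
        refine mul_le_mul_of_nonneg_left ?_ (by positivity)
        calc ‖∑ g ∈ F, φ (Θ g x)‖ ≤ ∑ g ∈ F, ‖φ (Θ g x)‖ := norm_sum_le _ _
          _ ≤ ∑ g ∈ F, 2 * ‖x‖ := Finset.sum_le_sum fun g _ => by
              simpa [norm_theta Θ hΘ g x] using state_norm_apply_le hφ (Θ g x)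
          _ = F.card * (2 * ‖x‖) := by rw [Finset.sum_const, nsmul_eq_mul]
    _ ≤ 2 * ‖x‖ := by
        rcases Nat.eq_zero_or_pos F.card with h | h
        · simp [h]
        · rw [← mul_assoc, inv_mul_cancel₀ (by positivity : (F.card : ℝ) ≠ 0), one_mul]

lemma avgW_almost_invariant [DecidableEq G] (F : Finset G) (hFne : F.Nonempty)
    {φ : WeakDual ℂ A} (hφ : IsState φ) (g : G) (x : A) :
    ‖avgW Θ hΘ F φ (Θ g x) - avgW Θ hΘ F φ x‖ ≤
      2 * ‖x‖ * (((F.image (· * g) ∆ F).card : ℝ) / F.card) := by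
  have hcard : (0:ℝ) < F.card := by exact_mod_cast Finset.card_pos.2 hFne
  set S := F.image (· * g) with hS
  set u : G → ℂ := fun h => φ (Θ h x) with hu
  have hub : ∀ h, ‖u h‖ ≤ 2 * ‖x‖ := fun h => by
    simpa [hu, norm_theta Θ hΘ h x] using state_norm_apply_le hφ (Θ h x)
  have h1 : avgW Θ hΘ F φ (Θ g x) = ((F.card : ℂ))⁻¹ * ∑ h ∈ S, u h := by
    rw [avgW_apply, avg_apply_sum]
    congr 1
    rw [hS, Finset.sum_image (fun a _ b _ h => mul_right_cancel h)]
    refine Finset.sum_congr rfl fun h _ => ?_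
    rw [hu]
    congr 1
    rw [map_mul, AlgEquiv.mul_apply]
  have h2 : avgW Θ hΘ F φ x = ((F.card : ℂ))⁻¹ * ∑ h ∈ F, u h := by
    rw [avgW_apply, avg_apply_sum]
  have hsplit : ∑ h ∈ S, u h - ∑ h ∈ F, u h = ∑ h ∈ S \ F, u h - ∑ h ∈ F \ S, u h := by
    have e1 : ∑ h ∈ S \ (S ∩ F), u h + ∑ h ∈ S ∩ F, u h = ∑ h ∈ S, u h :=
      Finset.sum_sdiff Finset.inter_subset_left
    have e2 : ∑ h ∈ F \ (F ∩ S), u h + ∑ h ∈ F ∩ S, u h = ∑ h ∈ F, u h :=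
      Finset.sum_sdiff Finset.inter_subset_left
    rw [Finset.sdiff_inter_self_left] at e1 e2
    rw [← e1, ← e2, Finset.inter_comm]
    ring
  have hcardsplit : ((S ∆ F).card : ℝ) = (S \ F).card + (F \ S).card := by
    rw [symmDiff_def, Finset.sup_eq_union,
      Finset.card_union_of_disjoint disjoint_sdiff_sdiff]
    push_cast; ring
  calc ‖avgW Θ hΘ F φ (Θ g x) - avgW Θ hΘ F φ x‖
      = ((F.card:ℝ))⁻¹ * ‖∑ h ∈ S, u h - ∑ h ∈ F, u h‖ := by
        rw [h1, h2, ← mul_sub, norm_mul, norm_inv]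
        norm_num
    _ ≤ ((F.card:ℝ))⁻¹ * (((S ∆ F).card : ℝ) * (2 * ‖x‖)) := by
        refine mul_le_mul_of_nonneg_left ?_ (by positivity)
        rw [hsplit, hcardsplit]
        calc ‖∑ h ∈ S \ F, u h - ∑ h ∈ F \ S, u h‖
            ≤ ‖∑ h ∈ S \ F, u h‖ + ‖∑ h ∈ F \ S, u h‖ := norm_sub_le _ _
          _ ≤ ∑ h ∈ S \ F, ‖u h‖ + ∑ h ∈ F \ S, ‖u h‖ :=
              add_le_add (norm_sum_le _ _) (norm_sum_le _ _)
          _ ≤ ((S \ F).card : ℝ) * (2 * ‖x‖) + ((F \ S).card : ℝ) * (2 * ‖x‖) := by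
              refine add_le_add ?_ ?_ <;>
              · refine le_trans (Finset.sum_le_sum fun h _ => hub h) ?_
                rw [Finset.sum_const, nsmul_eq_mul]
          _ = (((S \ F).card : ℝ) + ((F \ S).card : ℝ)) * (2 * ‖x‖) := by ring
    _ = 2 * ‖x‖ * (((S ∆ F).card : ℝ) / F.card) := by
        field_simp

end Action

lemma mapClusterPt_eq_of_tendsto {α : Type*} [TopologicalSpace α] [T2Space α] {u : ℕ → α}
    {c L : α} (hc : MapClusterPt c Filter.atTop u)
    (hL : Filter.Tendsto u Filter.atTop (nhds L)) : c = L := by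
  have h1 : (nhds c ⊓ Filter.map u Filter.atTop).NeBot := hc
  have h2 : nhds c ⊓ Filter.map u Filter.atTop ≤ nhds c ⊓ nhds L := inf_le_inf_left _ hL
  exact eq_of_nhds_neBot (h1.mono h2)

section Key

variable [PartialOrder A] [StarOrderedRing A]
variable {G : Type*} [Group G] [DecidableEq G] (Θ : G →* (A ≃ₐ[ℂ] A)) (hΘ : IsStarAction Θ)

include hΘ in
lemma smul_nonneg' {r : ℝ} (hr : 0 ≤ r) {y : A} (hy : 0 ≤ y) : 0 ≤ ((r : ℂ)) • y := by
  obtain ⟨s, rfl⟩ := exists_star_mul_self hy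
  have : ((r : ℂ)) • (star s * s)
      = star (((Real.sqrt r : ℝ) : ℂ) • s) * (((Real.sqrt r : ℝ) : ℂ) • s) := by
    rw [star_smul, smul_mul_smul_comm]
    congr 1
    rw [Complex.star_def, Complex.conj_ofReal, ← Complex.ofReal_mul, Real.mul_self_sqrt hr]
  rw [this]
  exact star_mul_self_nonneg _

include hΘ in
lemma avg_nonneg (F : Finset G) {x : A} (hx : 0 ≤ x) : 0 ≤ avg Θ F x := by
  rw [avg, show ((F.card : ℂ)) = (((F.card : ℝ)) : ℂ) by push_cast; ring,
    ← Complex.ofReal_inv]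
  refine smul_nonneg' Θ hΘ (by positivity) ?_
  exact Finset.sum_nonneg fun g _ => theta_nonneg Θ hΘ g hx

include hΘ in
lemma avg_norm_le (F : Finset G) (x : A) : ‖avg Θ F x‖ ≤ ‖x‖ := by
  rw [avg, norm_smul]
  have h1 : ‖((F.card : ℂ))⁻¹‖ = ((F.card : ℝ))⁻¹ := by
    rw [norm_inv]; norm_num
  rw [h1]
  calc ((F.card : ℝ))⁻¹ * ‖∑ g ∈ F, Θ g x‖ ≤ ((F.card : ℝ))⁻¹ * (F.card * ‖x‖) := by
        refine mul_le_mul_of_nonneg_left ?_ (by positivity)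
        calc ‖∑ g ∈ F, Θ g x‖ ≤ ∑ g ∈ F, ‖Θ g x‖ := norm_sum_le _ _
          _ = ∑ g ∈ F, ‖x‖ := Finset.sum_congr rfl fun g _ => norm_theta Θ hΘ g x
          _ = F.card * ‖x‖ := by rw [Finset.sum_const, nsmul_eq_mul]
    _ ≤ ‖x‖ := by
        rcases Nat.eq_zero_or_pos F.card with h | h
        · simp [h]
        · rw [← mul_assoc, inv_mul_cancel₀ (by positivity : (F.card : ℝ) ≠ 0), one_mul]

lemma inv_state_avg {ψ : WeakDual ℂ A} (hinv : ∀ (g : G) (x : A), ψ (Θ g x) = ψ x)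
    (F : Finset G) (hFne : F.Nonempty) (x : A) : ψ (avg Θ F x) = ψ x := by
  have hcard : (F.card : ℂ) ≠ 0 := Nat.cast_ne_zero.2 (Finset.card_ne_zero.2 hFne)
  rw [avg_apply_sum, Finset.sum_congr rfl (fun g _ => hinv g x), Finset.sum_const,
    nsmul_eq_mul, ← mul_assoc, inv_mul_cancel₀ hcard, one_mul]

lemma key_cluster (F : ℕ → Finset G) (hF : RightFolner F)
    (n : ℕ → ℕ) (hn : Filter.Tendsto n Filter.atTop Filter.atTop)
    (χ : ℕ → WeakDual ℂ A) (hχ : ∀ j, IsState (χ j)) :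
    ∃ ψ : WeakDual ℂ A, IsState ψ ∧ (∀ (g : G) (x : A), ψ (Θ g x) = ψ x) ∧
      MapClusterPt ψ Filter.atTop (fun j => avgW Θ hΘ (F (n j)) (χ j)) := by
  set u : ℕ → WeakDual ℂ A := fun j => avgW Θ hΘ (F (n j)) (χ j) with hu
  have hust : ∀ j, IsState (u j) := fun j => avgW_isState Θ hΘ _ (hF.1 _) (hχ j)
  have hubd : ∀ j x, ‖u j x‖ ≤ 2 * ‖x‖ := fun j x => avgW_norm_le Θ hΘ _ (hχ j) x
  set C : Set (WeakDual ℂ A) :=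
    {φ | (φ 1 = 1 ∧ ∀ x : A, 0 ≤ φ (star x * x)) ∧ ∀ x : A, ‖φ x‖ ≤ 2 * ‖x‖} with hC
  have hcl0 : IsClosed {z : ℂ | 0 ≤ z} := by
    have : {z : ℂ | 0 ≤ z} = Complex.re ⁻¹' (Set.Ici 0) ∩ Complex.im ⁻¹' {0} := by
      ext z
      simp [Complex.le_def, eq_comm]
    rw [this]
    exact (isClosed_Ici.preimage Complex.continuous_re).inter
      (isClosed_singleton.preimage Complex.continuous_im)
  have hCclosed : IsClosed C := by
    have : C = ({φ : WeakDual ℂ A | φ 1 = 1} ∩ ⋂ x : A, {φ : WeakDual ℂ A | 0 ≤ φ (star x * x)})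
        ∩ ⋂ x : A, {φ : WeakDual ℂ A | ‖φ x‖ ≤ 2 * ‖x‖} := by
      ext φ
      simp only [hC, Set.mem_setOf_eq, Set.mem_inter_iff, Set.mem_iInter]
    rw [this]
    refine IsClosed.inter (IsClosed.inter ?_ ?_) ?_
    · exact isClosed_eq (WeakDual.eval_continuous (1 : A)) continuous_const
    · exact isClosed_iInter fun x => hcl0.preimage (WeakDual.eval_continuous _)
    · exact isClosed_iInter fun x =>
        isClosed_le (continuous_norm.comp (WeakDual.eval_continuous _)) continuous_const
  have hsub : C ⊆ WeakDual.toStrongDual ⁻¹' Metric.closedBall 0 2 := by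
    intro φ hφ
    simp only [Set.mem_preimage, mem_closedBall_zero_iff]
    exact ContinuousLinearMap.opNorm_le_bound _ (by norm_num) (fun x => hφ.2 x)
  have hCcompact : IsCompact C :=
    (WeakDual.isCompact_closedBall (𝕜 := ℂ) (E := A) 0 2).of_isClosed_subset
      hCclosed hsub
  have hmem : ∀ j, u j ∈ C := fun j => ⟨⟨(hust j).1, (hust j).2⟩, hubd j⟩
  have hle : Filter.map u Filter.atTop ≤ Filter.principal C := by
    rw [Filter.le_principal_iff, Filter.mem_map]
    exact Filter.Eventually.of_forall hmem
  obtain ⟨ψ, hψC, hψcl⟩ := hCcompact.exists_mapClusterPt hle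
  refine ⟨ψ, ⟨hψC.1.1, hψC.1.2⟩, fun g x => ?_, hψcl⟩
  have hdiff : Filter.Tendsto (fun j => u j (Θ g x) - u j x) Filter.atTop (nhds 0) := by
    have hb := ((hF.2 g).comp hn).const_mul (2 * ‖x‖)
    rw [mul_zero] at hb
    exact squeeze_zero_norm
      (fun j => avgW_almost_invariant Θ hΘ (F (n j)) (hF.1 _) (hχ j) g x) hb
  have hcont : Continuous (fun φ : WeakDual ℂ A => φ (Θ g x) - φ x) :=
    (WeakDual.eval_continuous _).sub (WeakDual.eval_continuous _)
  have hcl2 : MapClusterPt (ψ (Θ g x) - ψ x) Filter.atTop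
      ((fun φ : WeakDual ℂ A => φ (Θ g x) - φ x) ∘ u) :=
    hψcl.continuousAt_comp hcont.continuousAt
  have := mapClusterPt_eq_of_tendsto hcl2 hdiff
  exact sub_eq_zero.1 this

end Key

end Stmt15

/-- For any right Følner sequence `(F_k)` and positive `a`, the norms of the ergodic
averages `‖Avg_{F_k} a‖` converge to `m(a | S^G)`; in particular the limit does not
depend on the Følner sequence. -/
theorem stmt15 {A G : Type*} [NormedRing A] [StarRing A] [CStarRing A] [NormedAlgebra ℂ A]
    [CompleteSpace A] [StarModule ℂ A] [TopologicalSpace.SeparableSpace A]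
    [PartialOrder A] [StarOrderedRing A] [Group G] [Countable G] [DecidableEq G]
    (Θ : G →* (A ≃ₐ[ℂ] A)) (hΘ : IsStarAction Θ)
    (F : ℕ → Finset G) (hF : RightFolner F)
    (a : A) (ha : 0 ≤ a) :
    Filter.Tendsto (fun k => ‖avg Θ (F k) a‖) Filter.atTop
      (nhds (sSup {r : ℝ | ∃ ψ : WeakDual ℂ A, IsState ψ ∧
        (∀ (g : G) (x : A), ψ (Θ g x) = ψ x) ∧ r = (ψ a).re})) := by
  classical
  open Stmt15 in
  obtain hA | hA := subsingleton_or_nontrivial A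
  · have hset : {r : ℝ | ∃ ψ : WeakDual ℂ A, IsState ψ ∧
        (∀ (g : G) (x : A), ψ (Θ g x) = ψ x) ∧ r = (ψ a).re} = ∅ := by
      ext r
      simp only [Set.mem_setOf_eq, Set.mem_empty_iff_false, iff_false, not_exists]
      rintro ψ ⟨hψ, -, -⟩
      have := Stmt15.nontrivial_of_state hψ.1
      exact false_of_nontrivial_of_subsingleton A
    rw [hset, Real.sSup_empty]
    have hz : ∀ k, ‖avg Θ (F k) a‖ = 0 := fun k => by
      rw [Subsingleton.elim (avg Θ (F k) a) 0, norm_zero]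
    simp only [hz]
    exact tendsto_const_nhds
  · set S := {r : ℝ | ∃ ψ : WeakDual ℂ A, IsState ψ ∧
        (∀ (g : G) (x : A), ψ (Θ g x) = ψ x) ∧ r = (ψ a).re} with hSdef
    set rseq : ℕ → ℝ := fun k => ‖avg Θ (F k) a‖ with hrdef
    have hex : ∀ k, ∃ φ : WeakDual ℂ A, IsState φ ∧
        φ (avg Θ (F k) a) = ((‖avg Θ (F k) a‖ : ℝ) : ℂ) :=
      fun k => Stmt15.exists_state_norm_attained (Stmt15.avg_nonneg Θ hΘ (F k) ha)
    choose φs hφs hφv using hex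
    obtain ⟨ψ₀, hψ₀st, hψ₀inv, -⟩ :=
      Stmt15.key_cluster Θ hΘ F hF id Filter.tendsto_id φs hφs
    have hSne : S.Nonempty := ⟨(ψ₀ a).re, ψ₀, hψ₀st, hψ₀inv, rfl⟩
    have hSub : ∀ r ∈ S, ∀ k, r ≤ rseq k := by
      rintro r ⟨ψ, hψ, hinv, rfl⟩ k
      have havg : ψ (avg Θ (F k) a) = ψ a :=
        Stmt15.inv_state_avg Θ hinv (F k) (hF.1 k) a
      have hb := (Stmt15.state_nonneg_bounds hψ (Stmt15.avg_nonneg Θ hΘ (F k) ha)).2.2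
      rw [havg] at hb
      exact hb
    have hbdd : BddAbove S := ⟨rseq 0, fun r hr => hSub r hr 0⟩
    have hmle : ∀ k, sSup S ≤ rseq k := fun k => csSup_le hSne (fun r hr => hSub r hr k)
    refine Filter.tendsto_of_subseq_tendsto fun ns hns => ?_
    have hrbd : ∀ j, rseq (ns j) ∈ Set.Icc (0 : ℝ) ‖a‖ := fun j =>
      ⟨norm_nonneg _, Stmt15.avg_norm_le Θ hΘ _ a⟩
    obtain ⟨L, -, ms, hms, hLtend⟩ := tendsto_subseq_of_bounded (Metric.isBounded_Icc (0:ℝ) ‖a‖) hrbd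
    refine ⟨ms, ?_⟩
    obtain ⟨ψ, hψst, hψinv, hψcl⟩ :=
      Stmt15.key_cluster Θ hΘ F hF (ns ∘ ms) (hns.comp hms.tendsto_atTop)
        (fun j => φs (ns (ms j))) (fun j => hφs _)
    have hψa : ψ a = ((L : ℝ) : ℂ) := by
      refine Stmt15.mapClusterPt_eq_of_tendsto
        (hψcl.continuousAt_comp (f := fun φ : WeakDual ℂ A => φ a)
          (WeakDual.eval_continuous a).continuousAt) ?_
      have heq : ∀ j, ((fun φ : WeakDual ℂ A => φ a) ∘
          fun j => Stmt15.avgW Θ hΘ (F ((ns ∘ ms) j)) (φs (ns (ms j)))) j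
          = ((rseq (ns (ms j)) : ℝ) : ℂ) := fun j => by
        simp only [Function.comp_apply, Stmt15.avgW_apply]
        exact hφv (ns (ms j))
      exact ((Complex.continuous_ofReal.tendsto L).comp hLtend).congr
        (fun j => (heq j).symm)
    have hLS : L ∈ S := ⟨ψ, hψst, hψinv, by rw [hψa, Complex.ofReal_re]⟩
    have hLm : L = sSup S := le_antisymm (le_csSup hbdd hLS)
      (ge_of_tendsto hLtend (Filter.Eventually.of_forall fun j => hmle _))
    exact hLm ▸ hLtend
end

section
/- Let (𝔄, G, Θ) be a C*-dynamical system with G countable discrete amenable. Then (𝔄, G, Θ) is uniquely ergodic if and only if there exists a state φ on 𝔄 such that for every right Følner sequence (F_k) for G and every x ∈ 𝔄, the averages (1/|F_k|) Σ_{g∈F_k} Θ_g x converge in norm to φ(x)·1. -/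
open scoped ComplexOrder symmDiff

set_option linter.unusedSectionVars false

section Aux

variable {A G : Type*} [NormedRing A] [StarRing A] [CStarRing A] [NormedAlgebra ℂ A]
    [CompleteSpace A] [StarModule ℂ A] [Nontrivial A] [Group G] [DecidableEq G]

variable (Θ : G →* (A ≃ₐ[ℂ] A))

lemma UE.norm_theta (hΘ : IsStarAction Θ) (g : G) (x : A) : ‖Θ g x‖ = ‖x‖ := by
  letI : CStarAlgebra A := { }
  exact StarAlgEquiv.norm_map
    ({ Θ g with map_star' := hΘ g, map_smul' := map_smul (Θ g) } : A ≃⋆ₐ[ℂ] A) x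

lemma UE.avg_one {F : Finset G} (hF : F.Nonempty) : avg Θ F 1 = 1 := by
  have hc : (F.card : ℂ) ≠ 0 := by
    exact_mod_cast Nat.cast_ne_zero.mpr (Finset.card_ne_zero_of_mem hF.choose_spec)
  simp only [avg, map_one, Finset.sum_const, ← Nat.cast_smul_eq_nsmul ℂ, smul_smul]
  rw [inv_mul_cancel₀ hc, one_smul]

lemma UE.avg_add (F : Finset G) (x y : A) : avg Θ F (x + y) = avg Θ F x + avg Θ F y := by
  simp [avg, Finset.sum_add_distrib, smul_add]

lemma UE.avg_smul (F : Finset G) (c : ℂ) (x : A) : avg Θ F (c • x) = c • avg Θ F x := by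
  simp only [avg, map_smul, ← Finset.smul_sum]
  rw [smul_comm]

lemma UE.avg_norm_le (hΘ : IsStarAction Θ) {F : Finset G} (hF : F.Nonempty) (x : A) :
    ‖avg Θ F x‖ ≤ ‖x‖ := by
  have hc : (0:ℝ) < (F.card : ℝ) := by exact_mod_cast Finset.card_pos.mpr hF
  calc ‖avg Θ F x‖ = (F.card : ℝ)⁻¹ * ‖∑ g ∈ F, Θ g x‖ := by
        simp [avg, norm_smul]
    _ ≤ (F.card : ℝ)⁻¹ * ∑ g ∈ F, ‖Θ g x‖ := by
        gcongr; exact norm_sum_le _ _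
    _ = (F.card : ℝ)⁻¹ * (F.card * ‖x‖) := by
        rw [Finset.sum_congr rfl fun g _ => UE.norm_theta Θ hΘ g x]
        simp
    _ = ‖x‖ := by field_simp

lemma UE.avg_shift_bound (hΘ : IsStarAction Θ) {F : Finset G} (hF : F.Nonempty) (g : G) (x : A) :
    ‖avg Θ F (Θ g x) - avg Θ F x‖ ≤
      (((Finset.image (· * g) F ∆ F).card : ℝ) / F.card) * ‖x‖ := by
  classical
  have hc : (0:ℝ) < (F.card : ℝ) := by exact_mod_cast Finset.card_pos.mpr hF
  set F' : Finset G := Finset.image (· * g) F with hF'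
  have hinj : ∀ a ∈ F, ∀ b ∈ F, a * g = b * g → a = b := fun a _ b _ h => by
    exact mul_right_cancel h
  have hsum : ∑ h ∈ F, Θ h (Θ g x) = ∑ h ∈ F', Θ h x := by
    rw [hF', Finset.sum_image hinj]
    refine Finset.sum_congr rfl fun h _ => ?_
    rw [map_mul Θ]
    rfl
  have hcard : F'.card = F.card := Finset.card_image_of_injective _ (mul_left_injective g)
  have hdiff : avg Θ F (Θ g x) - avg Θ F x
      = ((F.card : ℂ))⁻¹ • (∑ h ∈ F' \ F, Θ h x - ∑ h ∈ F \ F', Θ h x) := by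
    rw [Finset.sum_sdiff_sub_sum_sdiff]
    simp only [avg, hsum, smul_sub]
  have hcardsym : ((F' ∆ F).card : ℝ) = ((F' \ F).card : ℝ) + ((F \ F').card : ℝ) := by
    rw [symmDiff_def]
    have hd : Disjoint (F' \ F) (F \ F') :=
      Finset.disjoint_left.mpr fun a ha hb => (Finset.mem_sdiff.mp hb).2 (Finset.mem_sdiff.mp ha).1
    have : (F' \ F ⊔ F \ F') = (F' \ F) ∪ (F \ F') := rfl
    rw [this, Finset.card_union_of_disjoint hd]
    push_cast
    ring
  calc ‖avg Θ F (Θ g x) - avg Θ F x‖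
      = (F.card : ℝ)⁻¹ * ‖∑ h ∈ F' \ F, Θ h x - ∑ h ∈ F \ F', Θ h x‖ := by
        rw [hdiff, norm_smul]; simp
    _ ≤ (F.card : ℝ)⁻¹ * (‖∑ h ∈ F' \ F, Θ h x‖ + ‖∑ h ∈ F \ F', Θ h x‖) := by
        gcongr; exact norm_sub_le _ _
    _ ≤ (F.card : ℝ)⁻¹ * (((F' \ F).card : ℝ) * ‖x‖ + ((F \ F').card : ℝ) * ‖x‖) := by
        gcongr
        · calc ‖∑ h ∈ F' \ F, Θ h x‖ ≤ ∑ h ∈ F' \ F, ‖Θ h x‖ := norm_sum_le _ _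
            _ = ((F' \ F).card : ℝ) * ‖x‖ := by
              rw [Finset.sum_congr rfl fun h _ => UE.norm_theta Θ hΘ h x]; simp [mul_comm]
        · calc ‖∑ h ∈ F \ F', Θ h x‖ ≤ ∑ h ∈ F \ F', ‖Θ h x‖ := norm_sum_le _ _
            _ = ((F \ F').card : ℝ) * ‖x‖ := by
              rw [Finset.sum_congr rfl fun h _ => UE.norm_theta Θ hΘ h x]; simp [mul_comm]
    _ = (((F' ∆ F).card : ℝ) / F.card) * ‖x‖ := by
        rw [hcardsym]; ring

end Aux

section StateLemmas

variable {A : Type*} [NormedRing A] [StarRing A] [CStarRing A] [NormedAlgebra ℂ A]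
    [CompleteSpace A] [StarModule ℂ A] [Nontrivial A]

set_option linter.unusedSectionVars false

lemma UE.state_nonneg (φ : WeakDual ℂ A) (hφ : IsState φ) {z : A} (hz : IsSelfAdjoint z)
    (hsp : ∀ t ∈ spectrum ℝ z, 0 ≤ t) : 0 ≤ φ z := by
  letI : CStarAlgebra A := { }
  letI := CStarAlgebra.spectralOrder A
  haveI := CStarAlgebra.spectralOrderedRing A
  have h0 : (0:A) ≤ z := by
    refine ⟨by simpa using hz, ?_⟩
    rw [sub_zero, quasispectrumRestricts_iff_spectrumRestricts, SpectrumRestricts.nnreal_iff]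
    simpa using hsp
  rw [StarOrderedRing.nonneg_iff] at h0
  clear hz hsp
  induction h0 using AddSubmonoid.closure_induction with
  | mem x hx => obtain ⟨s, rfl⟩ := hx; exact hφ.2 s
  | zero => simp
  | add x y hx hy hx' hy' => rw [map_add]; exact add_nonneg hx' hy'

lemma UE.state_selfadjoint_real_bound (φ : WeakDual ℂ A) (hφ : IsState φ) {z : A}
    (hz : IsSelfAdjoint z) : φ z = ((φ z).re : ℂ) ∧ |(φ z).re| ≤ ‖z‖ := by
  have hsmul : ∀ r : ℝ, φ (algebraMap ℝ A r) = (r : ℂ) := by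
    intro r
    rw [IsScalarTower.algebraMap_apply ℝ ℂ A, Algebra.algebraMap_eq_smul_one, map_smul,
      smul_eq_mul, hφ.1, mul_one, Complex.coe_algebraMap]
  have hbound : ∀ t ∈ spectrum ℝ z, |t| ≤ ‖z‖ := fun t ht => by
    simpa using spectrum.norm_le_norm_of_mem (𝕜 := ℝ) ht
  have hplus : 0 ≤ φ (algebraMap ℝ A ‖z‖ + z) := by
    refine UE.state_nonneg φ hφ ?_ ?_
    · exact (IsSelfAdjoint.all ((‖z‖ : ℝ))).algebraMap A |>.add hz
    · intro t ht
      rw [← spectrum.singleton_add_eq] at ht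
      obtain ⟨r, hr, u, hu, rfl⟩ := Set.mem_add.mp ht
      rw [Set.mem_singleton_iff] at hr; subst hr
      have := hbound u hu
      have := abs_le.mp this
      linarith [this.1]
  have hminus : 0 ≤ φ (algebraMap ℝ A ‖z‖ - z) := by
    refine UE.state_nonneg φ hφ ?_ ?_
    · exact (IsSelfAdjoint.all ((‖z‖ : ℝ))).algebraMap A |>.sub hz
    · intro t ht
      rw [← spectrum.singleton_sub_eq] at ht
      obtain ⟨r, hr, u, hu, rfl⟩ := Set.mem_sub.mp ht
      rw [Set.mem_singleton_iff] at hr; subst hr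
      have := abs_le.mp (hbound u hu)
      linarith [this.2]
  rw [map_add, hsmul] at hplus
  rw [map_sub, hsmul] at hminus
  rw [Complex.le_def] at hplus hminus
  simp only [Complex.add_re, Complex.add_im, Complex.sub_re, Complex.sub_im, Complex.zero_re,
    Complex.zero_im, Complex.ofReal_re, Complex.ofReal_im, zero_add, zero_sub] at hplus hminus
  constructor
  · apply Complex.ext <;> simp [hplus.2]
  · rw [abs_le]; constructor <;> linarith [hplus.1, hminus.1]

lemma UE.state_norm_selfadjoint_le (φ : WeakDual ℂ A) (hφ : IsState φ) {z : A}
    (hz : IsSelfAdjoint z) : ‖φ z‖ ≤ ‖z‖ := by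
  obtain ⟨h1, h2⟩ := UE.state_selfadjoint_real_bound φ hφ hz
  rw [h1]
  simpa using h2

lemma UE.state_norm_le (φ : WeakDual ℂ A) (hφ : IsState φ) (a : A) : ‖φ a‖ ≤ 2 * ‖a‖ := by
  have hre : ‖(realPart a : A)‖ ≤ ‖a‖ := by
    rw [realPart_apply_coe]
    calc ‖(2⁻¹ : ℝ) • (a + star a)‖ = 2⁻¹ * ‖a + star a‖ := by
          rw [norm_smul]; norm_num
      _ ≤ 2⁻¹ * (‖a‖ + ‖star a‖) := by gcongr; exact norm_add_le _ _
      _ = ‖a‖ := by rw [norm_star]; ring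
  have him : ‖(imaginaryPart a : A)‖ ≤ ‖a‖ := by
    have heq : ‖(imaginaryPart a : A)‖ = 2⁻¹ * ‖a - star a‖ := by
      rw [imaginaryPart_apply_coe, norm_smul, norm_smul]; simp
    rw [heq]
    calc 2⁻¹ * ‖a - star a‖ ≤ 2⁻¹ * (‖a‖ + ‖star a‖) := by gcongr; exact norm_sub_le _ _
      _ = ‖a‖ := by rw [norm_star]; ring
  calc ‖φ a‖ = ‖φ ((realPart a : A) + Complex.I • (imaginaryPart a : A))‖ := by
        rw [realPart_add_I_smul_imaginaryPart]
    _ ≤ ‖φ (realPart a : A)‖ + ‖φ (Complex.I • (imaginaryPart a : A))‖ := by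
        rw [map_add]; exact norm_add_le _ _
    _ = ‖φ (realPart a : A)‖ + ‖φ (imaginaryPart a : A)‖ := by
        rw [map_smul]; simp
    _ ≤ ‖a‖ + ‖a‖ := by
        gcongr
        · exact (UE.state_norm_selfadjoint_le φ hφ (realPart a).2).trans hre
        · exact (UE.state_norm_selfadjoint_le φ hφ (imaginaryPart a).2).trans him
    _ = 2 * ‖a‖ := by ring

end StateLemmas
section Norming

variable {A : Type*} [NormedRing A] [StarRing A] [CStarRing A] [NormedAlgebra ℂ A]
    [CompleteSpace A] [StarModule ℂ A] [Nontrivial A]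

set_option linter.unusedSectionVars false

lemma UE.im_eq_zero_of_norm_le_one (g : A →L[ℂ] ℂ) (hn : ‖g‖ ≤ 1) (h1 : g 1 = 1)
    {z : A} (hz : IsSelfAdjoint z) : (g z).im = 0 := by
  have key : ∀ r : ℝ, (g z).re ^ 2 + ((g z).im + r) ^ 2 ≤ ‖z‖ ^ 2 + r ^ 2 := by
    intro r
    set c : ℂ := Complex.I * r with hc
    set u : A := z + c • 1 with hu
    have hstaru : star u * u = z * z + ((r : ℂ) ^ 2) • 1 := by
      have hsc : star c = -c := by simp [hc, Complex.ext_iff]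
      have hcc : -c * c = (r : ℂ) ^ 2 := by
        rw [hc]; ring_nf; rw [Complex.I_sq]; ring
      rw [hu, star_add, star_smul, star_one, hz.star_eq]
      rw [show star c = -c from hsc]
      rw [add_mul, mul_add, mul_add, mul_smul_comm, mul_one, smul_mul_assoc, one_mul,
        smul_mul_assoc, one_mul, smul_smul, hcc]
      module
    have hgule : ‖g u‖ ≤ ‖u‖ := (g.le_opNorm u).trans (mul_le_of_le_one_left (norm_nonneg u) hn)
    have hnu : ‖u‖ ^ 2 ≤ ‖z‖ ^ 2 + r ^ 2 := by
      have h1' : ‖u‖ ^ 2 = ‖star u * u‖ := by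
        rw [CStarRing.norm_star_mul_self]; ring
      rw [h1', hstaru]
      calc ‖z * z + ((r:ℂ)^2) • (1:A)‖ ≤ ‖z * z‖ + ‖((r:ℂ)^2) • (1:A)‖ := norm_add_le _ _
        _ ≤ ‖z‖ * ‖z‖ + ‖((r:ℂ)^2)‖ * ‖(1:A)‖ := by
            gcongr
            · exact norm_mul_le _ _
            · rw [norm_smul]
        _ = ‖z‖ ^ 2 + r ^ 2 := by
            rw [CStarRing.norm_one, mul_one, ← Complex.ofReal_pow, Complex.norm_real]
            simp [sq_abs, sq]
    have hgu : g u = g z + c := by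
      rw [hu, map_add, map_smul, h1, smul_eq_mul, mul_one]
    have hre : (g u).re = (g z).re := by rw [hgu]; simp [hc]
    have him : (g u).im = (g z).im + r := by rw [hgu]; simp [hc]
    have hsq : ‖g u‖ ^ 2 = (g z).re ^ 2 + ((g z).im + r) ^ 2 := by
      rw [← hre, ← him, Complex.sq_norm, Complex.normSq_apply]; ring
    calc (g z).re ^ 2 + ((g z).im + r) ^ 2 = ‖g u‖ ^ 2 := hsq.symm
      _ ≤ ‖u‖ ^ 2 := pow_le_pow_left₀ (norm_nonneg _) hgule 2
      _ ≤ ‖z‖ ^ 2 + r ^ 2 := hnu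
  by_contra him
  set s := (g z).re
  set τ := (g z).im
  set r := (‖z‖ ^ 2 + 1 - s ^ 2 - τ ^ 2) / (2 * τ) with hr
  have h2τr : 2 * τ * r = ‖z‖ ^ 2 + 1 - s ^ 2 - τ ^ 2 := by
    rw [hr]; field_simp
  nlinarith [key r]

lemma UE.isState_of_norm_le_one (g : A →L[ℂ] ℂ) (hn : ‖g‖ ≤ 1) (h1 : g 1 = 1) :
    g 1 = 1 ∧ ∀ a : A, 0 ≤ g (star a * a) := by
  letI : CStarAlgebra A := { }
  refine ⟨h1, fun a => ?_⟩
  set b : A := star a * a with hb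
  have hbsa : IsSelfAdjoint b := IsSelfAdjoint.star_mul_self a
  have himb : (g b).im = 0 := UE.im_eq_zero_of_norm_le_one g hn h1 hbsa
  set w : A := algebraMap ℝ A ‖b‖ - b with hw
  have hwsa : IsSelfAdjoint w := ((IsSelfAdjoint.all (‖b‖ : ℝ)).algebraMap A).sub hbsa
  -- every element of the complex spectrum of w has norm at most ‖b‖
  have hspw : ∀ k ∈ spectrum ℂ w, ‖k‖ ≤ ‖b‖ := by
    intro k hk
    rw [hw, IsScalarTower.algebraMap_apply ℝ ℂ A, ← spectrum.singleton_sub_eq] at hk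
    obtain ⟨x, hx, μ, hμ, rfl⟩ := Set.mem_sub.mp hk
    rw [Set.mem_singleton_iff] at hx; subst hx
    have hμre : μ = (μ.re : ℂ) := hbsa.mem_spectrum_eq_re hμ
    have hμ' : μ.re ∈ spectrum ℝ b := by
      rw [← spectrum.algebraMap_mem_iff (S := ℂ) (R := ℝ)]
      rw [Complex.coe_algebraMap, ← hμre]
      exact hμ
    have h0 : 0 ≤ μ.re := spectrum_star_mul_self_nonneg _ hμ'
    have hle : ‖μ‖ ≤ ‖b‖ := spectrum.norm_le_norm_of_mem hμ
    rw [hμre, Complex.norm_real, Real.norm_eq_abs] at hle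
    have hcoe : (algebraMap ℝ ℂ) ‖b‖ = ((‖b‖ : ℝ) : ℂ) := congrFun Complex.coe_algebraMap _
    rw [hcoe, hμre, ← Complex.ofReal_sub, Complex.norm_real, Real.norm_eq_abs, abs_le]
    have := abs_le.mp hle
    constructor
    · linarith [this.2]
    · linarith [h0]
  have hwnorm : ‖w‖ ≤ ‖b‖ := by
    have hsr : spectralRadius ℂ w = (‖w‖₊ : ENNReal) := hwsa.spectralRadius_eq_nnnorm
    have hsrle : spectralRadius ℂ w ≤ (‖b‖₊ : ENNReal) := by
      rw [spectralRadius]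
      refine iSup₂_le fun k hk => ?_
      exact_mod_cast hspw k hk
    rw [hsr, ENNReal.coe_le_coe] at hsrle
    exact_mod_cast hsrle
  have hgw : g w = (‖b‖ : ℂ) - g b := by
    rw [hw, map_sub, IsScalarTower.algebraMap_apply ℝ ℂ A, Algebra.algebraMap_eq_smul_one,
      map_smul, smul_eq_mul, h1, mul_one, Complex.coe_algebraMap]
  have hgwle : ‖g w‖ ≤ ‖b‖ :=
    ((g.le_opNorm w).trans (mul_le_of_le_one_left (norm_nonneg w) hn)).trans hwnorm
  -- conclude 0 ≤ (g b).re
  have : ‖(‖b‖ : ℂ) - g b‖ ≤ ‖b‖ := hgw ▸ hgwle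
  have hre : |‖b‖ - (g b).re| ≤ ‖b‖ := by
    have h2 : ((‖b‖ : ℂ) - g b).im = 0 := by simp [himb]
    have h3 : ((‖b‖ : ℂ) - g b).re = ‖b‖ - (g b).re := by simp
    have h4 : ‖(‖b‖ : ℂ) - g b‖ = |‖b‖ - (g b).re| := by
      rw [Complex.norm_def, Complex.normSq_apply, h2, h3]
      simp [Real.sqrt_sq_eq_abs, sq]
      rw [← Real.sqrt_mul_self (abs_nonneg _)]
      rw [abs_mul_abs_self]
    rwa [h4] at this
  rw [Complex.le_def]
  refine ⟨?_, himb.symm⟩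
  simp only [Complex.zero_re]
  have := abs_le.mp hre
  linarith [this.2]

end Norming
section NormingState

variable {A : Type*} [NormedRing A] [StarRing A] [CStarRing A] [NormedAlgebra ℂ A]
    [CompleteSpace A] [StarModule ℂ A] [Nontrivial A]

set_option linter.unusedSectionVars false

lemma UE.exists_norming_state {y : A} (hy : IsSelfAdjoint y) :
    ∃ ψ : WeakDual ℂ A, IsState ψ ∧ ‖ψ y‖ = ‖y‖ := by
  letI : CStarAlgebra A := { }
  -- find a spectral value of maximal modulus
  obtain ⟨t, ht, htn⟩ : ∃ t ∈ spectrum ℂ y, ‖t‖ = ‖y‖ := by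
    obtain ⟨t, ht, h⟩ := spectrum.exists_nnnorm_eq_spectralRadius (A := A) y
    rw [hy.spectralRadius_eq_nnnorm] at h
    refine ⟨t, ht, ?_⟩
    have : ‖t‖₊ = ‖y‖₊ := by exact_mod_cast h
    exact congrArg NNReal.toReal this
  haveI := hy.isStarNormal
  set S : StarSubalgebra ℂ A := StarAlgebra.elemental ℂ y with hS
  haveI hSclosed : IsClosed (S : Set A) := StarAlgebra.elemental.isClosed ℂ y
  set z : S := ⟨y, StarAlgebra.elemental.self_mem ℂ y⟩ with hz
  have htz : t ∈ spectrum ℂ z := by rw [StarSubalgebra.spectrum_eq]; exact ht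
  obtain ⟨f, hf⟩ := WeakDual.CharacterSpace.mem_spectrum_iff_exists.mp htz
  -- the associated functional on the underlying submodule
  set p : Submodule ℂ A := Subalgebra.toSubmodule S.toSubalgebra with hp
  have hmem : ∀ v : p, (v : A) ∈ S := fun v => v.2
  let l : p →ₗ[ℂ] ℂ :=
    { toFun := fun v => f ⟨(v : A), hmem v⟩
      map_add' := fun v w => by
        rw [← map_add]
        congr 1
      map_smul' := fun c v => by
        rw [← map_smul]
        congr 1 }
  have hlbound : ∀ v : p, ‖l v‖ ≤ 1 * ‖v‖ := by
    intro v
    rw [one_mul]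
    have hmemsp : f ⟨(v : A), hmem v⟩ ∈ spectrum ℂ (⟨(v : A), hmem v⟩ : S) :=
      AlgHom.apply_mem_spectrum f _
    rw [StarSubalgebra.spectrum_eq] at hmemsp
    exact spectrum.norm_le_norm_of_mem hmemsp
  set fc : p →L[ℂ] ℂ := LinearMap.mkContinuous l 1 hlbound with hfc
  obtain ⟨gext, hgext, hgnorm⟩ := exists_extension_norm_eq p fc
  have hn : ‖gext‖ ≤ 1 := by
    rw [hgnorm]
    exact LinearMap.mkContinuous_norm_le l zero_le_one hlbound
  have h1 : gext 1 = 1 := by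
    have h1p : (1 : A) ∈ p := one_mem S
    have := hgext ⟨1, h1p⟩
    rw [this]
    show f ⟨(1:A), _⟩ = 1
    have : (⟨(1:A), hmem ⟨1, h1p⟩⟩ : S) = 1 := by ext; simp
    rw [this, map_one]
  have hyval : gext y = t := by
    have hyp : y ∈ p := StarAlgebra.elemental.self_mem ℂ y
    have := hgext ⟨y, hyp⟩
    rw [this]
    show f ⟨y, _⟩ = t
    exact hf
  obtain ⟨_, hpos⟩ := UE.isState_of_norm_le_one gext hn h1
  exact ⟨gext, ⟨h1, hpos⟩, (congrArg norm hyval).trans htn⟩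

end NormingState
section Backward

variable {A G : Type*} [NormedRing A] [StarRing A] [CStarRing A] [NormedAlgebra ℂ A]
    [CompleteSpace A] [StarModule ℂ A] [Nontrivial A] [Group G] [DecidableEq G]

set_option linter.unusedSectionVars false

open Filter

lemma UE.backward (Θ : G →* (A ≃ₐ[ℂ] A)) (hΘ : IsStarAction Θ)
    (hamen : ∃ F : ℕ → Finset G, RightFolner F)
    (φ : WeakDual ℂ A) (hst : IsState φ)
    (hconv : ∀ F : ℕ → Finset G, RightFolner F →
      ∀ x : A, Tendsto (fun k => ‖avg Θ (F k) x - φ x • (1 : A)‖) atTop (nhds 0)) :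
    ∃! ψ : WeakDual ℂ A, IsState ψ ∧ ∀ (g : G) (x : A), ψ (Θ g x) = ψ x := by
  obtain ⟨F, hF⟩ := hamen
  have hinv : ∀ (g : G) (x : A), φ (Θ g x) = φ x := by
    intro g x
    have h1 := hconv F hF x
    have h2 := hconv F hF (Θ g x)
    have h3 : Tendsto (fun k => ‖avg Θ (F k) (Θ g x) - avg Θ (F k) x‖) atTop (nhds 0) := by
      have hb := fun k => UE.avg_shift_bound Θ hΘ (hF.1 k) g x
      have ht : Tendsto (fun k =>
          (((Finset.image (· * g) (F k) ∆ F k).card : ℝ) / (F k).card) * ‖x‖) atTop (nhds 0) := by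
        simpa using (hF.2 g).mul_const ‖x‖
      exact squeeze_zero (fun k => norm_nonneg _) hb ht
    have h4 : Tendsto (fun _ : ℕ => ‖φ (Θ g x) • (1:A) - φ x • 1‖) atTop (nhds 0) := by
      have hb : ∀ k, ‖φ (Θ g x) • (1:A) - φ x • 1‖ ≤
          ‖avg Θ (F k) (Θ g x) - φ (Θ g x) • 1‖ + ‖avg Θ (F k) (Θ g x) - avg Θ (F k) x‖
            + ‖avg Θ (F k) x - φ x • 1‖ := by
        intro k
        calc ‖φ (Θ g x) • (1:A) - φ x • 1‖
            = ‖(φ (Θ g x) • (1:A) - avg Θ (F k) (Θ g x)) + (avg Θ (F k) (Θ g x) - avg Θ (F k) x)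
                + (avg Θ (F k) x - φ x • 1)‖ := by abel_nf
          _ ≤ ‖φ (Θ g x) • (1:A) - avg Θ (F k) (Θ g x)‖ + ‖avg Θ (F k) (Θ g x) - avg Θ (F k) x‖
                + ‖avg Θ (F k) x - φ x • 1‖ := norm_add₃_le
          _ = ‖avg Θ (F k) (Θ g x) - φ (Θ g x) • 1‖ + ‖avg Θ (F k) (Θ g x) - avg Θ (F k) x‖
                + ‖avg Θ (F k) x - φ x • 1‖ := by rw [norm_sub_rev]
      have ht : Tendsto (fun k => ‖avg Θ (F k) (Θ g x) - φ (Θ g x) • 1‖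
          + ‖avg Θ (F k) (Θ g x) - avg Θ (F k) x‖ + ‖avg Θ (F k) x - φ x • 1‖) atTop (nhds 0) := by
        simpa using (h2.add h3).add h1
      exact squeeze_zero (fun _ => norm_nonneg _) hb ht
    have h5 : ‖φ (Θ g x) • (1:A) - φ x • 1‖ = 0 := tendsto_nhds_unique tendsto_const_nhds h4
    have h6 : ‖φ (Θ g x) - φ x‖ = 0 := by
      rw [← sub_smul] at h5
      rw [← h5, norm_smul, CStarRing.norm_one, mul_one]
    rw [← sub_eq_zero]
    exact norm_eq_zero.mp h6
  refine ⟨φ, ⟨hst, hinv⟩, ?_⟩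
  rintro ψ ⟨hψst, hψinv⟩
  refine DFunLike.ext _ _ fun x => ?_
  have hψavg : ∀ k, ψ (avg Θ (F k) x) = ψ x := by
    intro k
    have hc : ((F k).card : ℂ) ≠ 0 := by
      exact_mod_cast Nat.cast_ne_zero.mpr (Finset.card_pos.mpr (hF.1 k)).ne'
    rw [avg, map_smul, map_sum]
    rw [Finset.sum_congr rfl fun g _ => hψinv g x, Finset.sum_const, smul_eq_mul]
    rw [nsmul_eq_mul, ← mul_assoc, inv_mul_cancel₀ hc, one_mul]
  have havgt : Tendsto (fun k => avg Θ (F k) x) atTop (nhds (φ x • (1:A))) :=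
    tendsto_iff_norm_sub_tendsto_zero.mpr (hconv F hF x)
  have h7 : Tendsto (fun k => ψ (avg Θ (F k) x)) atTop (nhds (ψ (φ x • (1:A)))) :=
    ((map_continuous ψ).tendsto _).comp havgt
  simp only [hψavg] at h7
  have h8 : ψ x = ψ (φ x • (1:A)) := tendsto_nhds_unique tendsto_const_nhds h7
  rw [h8, map_smul, smul_eq_mul, hψst.1, mul_one]

end Backward
section Forward

variable {A G : Type*} [NormedRing A] [StarRing A] [CStarRing A] [NormedAlgebra ℂ A]
    [CompleteSpace A] [StarModule ℂ A] [Nontrivial A] [Group G] [DecidableEq G]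

set_option linter.unusedSectionVars false
set_option maxHeartbeats 1000000

open Filter

lemma UE.avg_selfadjoint (Θ : G →* (A ≃ₐ[ℂ] A)) (hΘ : IsStarAction Θ) (F : Finset G) {x : A}
    (hx : IsSelfAdjoint x) : IsSelfAdjoint (avg Θ F x) := by
  show star _ = _
  rw [avg, star_smul, star_sum]
  congr 1
  · simp
  · exact Finset.sum_congr rfl fun g _ => by rw [← hΘ, hx.star_eq]

lemma UE.smul_one_selfadjoint (r : ℝ) : IsSelfAdjoint (((r : ℂ)) • (1 : A)) := by
  show star _ = _
  rw [star_smul, star_one]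
  congr 1
  simp

lemma UE.forward_sa (Θ : G →* (A ≃ₐ[ℂ] A)) (hΘ : IsStarAction Θ)
    (φ : WeakDual ℂ A) (hst : IsState φ) (hinv : ∀ (g : G) (x : A), φ (Θ g x) = φ x)
    (huni : ∀ ψ : WeakDual ℂ A,
      (IsState ψ ∧ ∀ (g : G) (x : A), ψ (Θ g x) = ψ x) → ψ = φ)
    (F : ℕ → Finset G) (hF : RightFolner F) {x : A} (hx : IsSelfAdjoint x) :
    Tendsto (fun k => ‖avg Θ (F k) x - φ x • (1 : A)‖) atTop (nhds 0) := by
  by_contra hcon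
  rw [Metric.tendsto_atTop] at hcon
  push_neg at hcon
  obtain ⟨ε, hε, hfreq⟩ := hcon
  set d : ℕ → A := fun k => avg Θ (F k) x - φ x • 1 with hd
  have hdist : ∀ k, dist ‖d k‖ 0 = ‖d k‖ := fun k => by
    rw [Real.dist_eq, sub_zero, abs_of_nonneg (norm_nonneg _)]
  set L : Filter ℕ := atTop ⊓ Filter.principal {k | ε ≤ ‖d k‖} with hL
  haveI hLne : L.NeBot := by
    rw [hL, ← frequently_mem_iff_neBot, frequently_atTop]
    intro N
    obtain ⟨k, hk1, hk2⟩ := hfreq N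
    exact ⟨k, hk1, hk2.trans_eq (hdist k)⟩
  have hφxre : φ x = ((φ x).re : ℂ) := (UE.state_selfadjoint_real_bound φ hst hx).1
  have hdsa : ∀ k, IsSelfAdjoint (d k) := by
    intro k
    refine (UE.avg_selfadjoint Θ hΘ (F k) hx).sub ?_
    rw [hφxre]
    exact UE.smul_one_selfadjoint _
  choose ψ hψst hψn using fun k => UE.exists_norming_state (hdsa k)
  have hbound2 : ∀ k (a : A), ‖ψ k (avg Θ (F k) a)‖ ≤ 2 * ‖a‖ := fun k a =>
    (UE.state_norm_le _ (hψst k) _).trans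
      (mul_le_mul_of_nonneg_left (UE.avg_norm_le Θ hΘ (hF.1 k) a) (by norm_num))
  let ωl : ℕ → (A →ₗ[ℂ] ℂ) := fun k =>
    { toFun := fun a => ψ k (avg Θ (F k) a)
      map_add' := fun a b => by
        show ψ k (avg Θ (F k) (a + b)) = ψ k (avg Θ (F k) a) + ψ k (avg Θ (F k) b)
        rw [UE.avg_add, map_add]
      map_smul' := fun c a => by
        show ψ k (avg Θ (F k) (c • a)) = c • ψ k (avg Θ (F k) a)
        rw [UE.avg_smul, map_smul] }
  let ω : ℕ → WeakDual ℂ A := fun k => LinearMap.mkContinuous (ωl k) 2 (fun a => hbound2 k a)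
  have hωapp : ∀ k (a : A), ω k a = ψ k (avg Θ (F k) a) := fun k a => rfl
  set K : Set (WeakDual ℂ A) := WeakDual.toStrongDual ⁻¹' Metric.closedBall 0 2 with hK
  have hKcomp : IsCompact K := WeakDual.isCompact_closedBall (𝕜 := ℂ) (E := A) 0 2
  have hmemK : ∀ k, ω k ∈ K := by
    intro k
    rw [hK, Set.mem_preimage, Metric.mem_closedBall, dist_zero_right]
    exact LinearMap.mkContinuous_norm_le (ωl k) (by norm_num) (fun a => hbound2 k a)
  have hmap : Filter.map ω L ≤ Filter.principal K :=
    le_principal_iff.mpr (mem_map.mpr (Eventually.of_forall hmemK))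
  haveI : (Filter.map ω L).NeBot := Filter.map_neBot
  obtain ⟨ω₀, hω₀K, hcp⟩ := hKcomp.exists_clusterPt hmap
  have hmemC : ∀ C : Set (WeakDual ℂ A), IsClosed C → (∀ᶠ k in L, ω k ∈ C) → ω₀ ∈ C := by
    intro C hC hev
    have h1 : Filter.map ω L ≤ Filter.principal C := le_principal_iff.mpr (mem_map.mpr hev)
    have h2 : ClusterPt ω₀ (Filter.principal C) := hcp.mono h1
    rwa [← mem_closure_iff_clusterPt, hC.closure_eq] at h2
  have hlim : ∀ (h : WeakDual ℂ A → ℂ) (c : ℂ), Continuous h →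
      Tendsto (fun k => h (ω k)) L (nhds c) → h ω₀ = c := by
    intro h c hh ht
    have : ClusterPt (h ω₀) (nhds c) := hcp.map hh.continuousAt (by rwa [tendsto_map'_iff])
    exact eq_of_nhds_neBot this
  have hω₀1 : ω₀ 1 = 1 := by
    have hC : IsClosed {μ : WeakDual ℂ A | μ 1 = 1} :=
      isClosed_eq (WeakDual.eval_continuous 1) continuous_const
    refine hmemC _ hC (Eventually.of_forall fun k => ?_)
    show ω k 1 = 1
    rw [hωapp, UE.avg_one Θ (hF.1 k), (hψst k).1]
  have hω₀pos : ∀ a : A, 0 ≤ ω₀ (star a * a) := by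
    intro a
    have hC : IsClosed {μ : WeakDual ℂ A | 0 ≤ μ (star a * a)} :=
      IsClosed.preimage (WeakDual.eval_continuous _) (isClosed_le continuous_const continuous_id)
    refine hmemC _ hC (Eventually.of_forall fun k => ?_)
    show (0:ℂ) ≤ ω k (star a * a)
    rw [hωapp, avg, map_smul]
    have hsum : (0:ℂ) ≤ ψ k (∑ g ∈ F k, Θ g (star a * a)) := by
      rw [map_sum]
      refine Finset.sum_nonneg fun g _ => ?_
      have hterm : Θ g (star a * a) = star (Θ g a) * Θ g a := by rw [map_mul, hΘ]
      rw [hterm]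
      exact (hψst k).2 _
    have hc : (0:ℂ) ≤ ((((F k).card : ℕ) : ℂ))⁻¹ := by
      rw [show ((((F k).card : ℕ)) : ℂ) = ((((F k).card : ℕ) : ℝ) : ℂ) by norm_cast,
        ← Complex.ofReal_inv, Complex.zero_le_real]
      exact inv_nonneg.mpr (Nat.cast_nonneg _)
    rw [smul_eq_mul]
    exact mul_nonneg hc hsum
  have hω₀inv : ∀ (g : G) (a : A), ω₀ (Θ g a) = ω₀ a := by
    intro g a
    have hcont : Continuous fun μ : WeakDual ℂ A => μ (Θ g a) - μ a :=
      (WeakDual.eval_continuous _).sub (WeakDual.eval_continuous _)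
    have ht : Tendsto (fun k => ω k (Θ g a) - ω k a) L (nhds 0) := by
      have hb : ∀ k, ‖ω k (Θ g a) - ω k a‖ ≤
          2 * (((((Finset.image (· * g) (F k)) ∆ (F k)).card : ℝ) / (F k).card) * ‖a‖) := by
        intro k
        rw [hωapp, hωapp, ← map_sub]
        refine (UE.state_norm_le _ (hψst k) _).trans ?_
        exact mul_le_mul_of_nonneg_left (UE.avg_shift_bound Θ hΘ (hF.1 k) g a) (by norm_num)
      have ht0 : Tendsto (fun k =>
          2 * (((((Finset.image (· * g) (F k)) ∆ (F k)).card : ℝ) / (F k).card) * ‖a‖))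
          atTop (nhds 0) := by
        simpa using (((hF.2 g).mul_const ‖a‖).const_mul 2)
      have h1 := squeeze_zero (fun k => norm_nonneg _) hb ht0
      exact (tendsto_zero_iff_norm_tendsto_zero.mpr h1).mono_left inf_le_left
    exact sub_eq_zero.mp (hlim _ 0 hcont ht)
  have hω₀far : ε ≤ ‖ω₀ x - φ x‖ := by
    have hC : IsClosed {μ : WeakDual ℂ A | ε ≤ ‖μ x - φ x‖} :=
      isClosed_le continuous_const (((WeakDual.eval_continuous x).sub continuous_const).norm)
    refine hmemC _ hC ?_
    rw [hL]
    refine Filter.eventually_inf_principal.mpr (Eventually.of_forall fun k hk => ?_)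
    have heq : ω k x - φ x = ψ k (d k) := by
      rw [hωapp, hd]
      simp only [map_sub, map_smul, smul_eq_mul, (hψst k).1, mul_one]
    show ε ≤ ‖ω k x - φ x‖
    rw [heq, hψn k]
    exact hk
  have hcontra : ω₀ = φ := huni ω₀ ⟨⟨hω₀1, hω₀pos⟩, hω₀inv⟩
  rw [hcontra] at hω₀far
  simp only [sub_self, norm_zero] at hω₀far
  linarith

lemma UE.forward (Θ : G →* (A ≃ₐ[ℂ] A)) (hΘ : IsStarAction Θ)
    (huniq : ∃! φ : WeakDual ℂ A, IsState φ ∧ ∀ (g : G) (x : A), φ (Θ g x) = φ x) :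
    ∃ φ : WeakDual ℂ A, IsState φ ∧ ∀ F : ℕ → Finset G, RightFolner F →
      ∀ x : A, Tendsto (fun k => ‖avg Θ (F k) x - φ x • (1 : A)‖) atTop (nhds 0) := by
  obtain ⟨φ, ⟨hst, hinv⟩, huni⟩ := huniq
  refine ⟨φ, hst, fun F hF x => ?_⟩
  have h1 := UE.forward_sa Θ hΘ φ hst hinv huni F hF (realPart x).2
  have h2 := UE.forward_sa Θ hΘ φ hst hinv huni F hF (imaginaryPart x).2
  have hb : ∀ k, ‖avg Θ (F k) x - φ x • (1:A)‖ ≤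
      ‖avg Θ (F k) (realPart x : A) - φ (realPart x : A) • (1:A)‖
        + ‖avg Θ (F k) (imaginaryPart x : A) - φ (imaginaryPart x : A) • (1:A)‖ := by
    intro k
    have hdecomp : avg Θ (F k) x - φ x • (1:A)
        = (avg Θ (F k) (realPart x : A) - φ (realPart x : A) • (1:A))
          + Complex.I • (avg Θ (F k) (imaginaryPart x : A) - φ (imaginaryPart x : A) • (1:A)) := by
      conv_lhs => rw [← realPart_add_I_smul_imaginaryPart x]
      rw [UE.avg_add, UE.avg_smul, map_add, map_smul, smul_eq_mul]
      module
    rw [hdecomp]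
    refine (norm_add_le _ _).trans ?_
    rw [norm_smul, Complex.norm_I, one_mul]
  refine squeeze_zero (fun k => norm_nonneg _) hb ?_
  simpa using h1.add h2

end Forward

/-- A C*-dynamical system over a countable discrete amenable group is uniquely ergodic
iff there is a state `φ` such that, for every right Følner sequence, the ergodic
averages of every element converge in norm to `φ(x)·1`. -/
theorem stmt17 {A G : Type*} [NormedRing A] [StarRing A] [CStarRing A] [NormedAlgebra ℂ A]
    [CompleteSpace A] [StarModule ℂ A] [Nontrivial A] [Group G] [Countable G] [DecidableEq G]
    (Θ : G →* (A ≃ₐ[ℂ] A)) (hΘ : IsStarAction Θ)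
    (hamen : ∃ F : ℕ → Finset G, RightFolner F) :
    (∃! φ : WeakDual ℂ A, IsState φ ∧ ∀ (g : G) (x : A), φ (Θ g x) = φ x) ↔
      ∃ φ : WeakDual ℂ A, IsState φ ∧ ∀ F : ℕ → Finset G, RightFolner F →
        ∀ x : A, Filter.Tendsto (fun k => ‖avg Θ (F k) x - φ x • (1 : A)‖)
          Filter.atTop (nhds 0) := by
  constructor
  · intro huniq
    exact UE.forward Θ hΘ huniq
  · rintro ⟨φ, hst, hconv⟩
    exact UE.backward Θ hΘ hamen φ hst hconv
end
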